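/- arXiv:2004.06032 — 7 statements merged into one kernel-verified Lean document; each statement's English description precedes it below -/
import Mathlib

section
/- Let n ≥ 1 and 0 ≤ t ≤ n. The maximum of |D_t(x)| over all binary words x of length n equals Σ_{i=0}^{t} C(n−t, i), where C denotes the binomial coefficient. Moreover, this maximum is attained by the alternating word 0101… -/
/-- The `t`-deletion ball of a binary word `x`: all subsequences of `x`
of length `|x| - t` (empty when `t > |x|`). -/
def deletionBall (t : ℕ) (x : List Bool) : Set (List Bool) :=
  {z | z.Sublist x ∧ z.length + t = x.length}

/-- The alternating word `0101…` of length `n`. -/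
def altWord (n : ℕ) : List Bool := (List.range n).map (fun i => decide (i % 2 = 1))

/-- The deletion ball as a `Finset`: sublists of `x` of length `m`. -/
def ballF (m : ℕ) (x : List Bool) : Finset (List Bool) :=
  (x.sublists.filter (fun z => z.length = m)).toFinset

lemma mem_ballF {m : ℕ} {x z : List Bool} :
    z ∈ ballF m x ↔ z.Sublist x ∧ z.length = m := by
  simp [ballF, List.mem_sublists]

lemma deletionBall_eq {t : ℕ} {x : List Bool} (ht : t ≤ x.length) :
    deletionBall t x = ↑(ballF (x.length - t) x) := by
  ext z
  simp only [deletionBall, Set.mem_setOf_eq, Finset.mem_coe, mem_ballF]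
  constructor
  · rintro ⟨h1, h2⟩; exact ⟨h1, by omega⟩
  · rintro ⟨h1, h2⟩; exact ⟨h1, by omega⟩

lemma pascal_sum (k s : ℕ) :
    ∑ i ∈ Finset.range (s + 2), (k + 1).choose i
      = ∑ i ∈ Finset.range (s + 2), k.choose i
        + ∑ i ∈ Finset.range (s + 1), k.choose i := by
  induction s with
  | zero => simp [Finset.sum_range_succ]; omega
  | succ s ih =>
      have hc : (k + 1).choose (s + 2) = k.choose (s + 1) + k.choose (s + 2) :=
        Nat.choose_succ_succ k (s + 1)
      have h1 : ∑ i ∈ Finset.range (s + 1 + 2), (k + 1).choose i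
          = ∑ i ∈ Finset.range (s + 2), (k + 1).choose i + (k + 1).choose (s + 2) :=
        Finset.sum_range_succ _ _
      have h2 : ∑ i ∈ Finset.range (s + 1 + 2), k.choose i
          = ∑ i ∈ Finset.range (s + 2), k.choose i + k.choose (s + 2) :=
        Finset.sum_range_succ _ _
      have h3 : ∑ i ∈ Finset.range (s + 1 + 1), k.choose i
          = ∑ i ∈ Finset.range (s + 1), k.choose i + k.choose (s + 1) :=
        Finset.sum_range_succ _ _
      rw [h1, h2, ih, hc]
      omega

/-- strip a head that doesn't match -/
lemma sublist_of_ne {b c : Bool} {w l : List Bool} (h : (b :: w).Sublist (c :: l))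
    (hbc : b ≠ c) : (b :: w).Sublist l := by
  cases h with
  | cons _ h => exact h
  | cons_cons => exact absurd rfl hbc

lemma tail_sublist_of_cons {a : Bool} {w l : List Bool} (h : (a :: w).Sublist (a :: l)) :
    w.Sublist l := List.cons_sublist_cons.mp h

lemma first_split {b : Bool} : ∀ {l : List Bool}, b ∈ l →
    ∃ p q, l = p ++ b :: q ∧ b ∉ p := by
  intro l h
  induction l with
  | nil => simp at h
  | cons c l ih =>
      by_cases hc : b = c
      · exact ⟨[], l, by simp [hc], by simp⟩
      · have hb : b ∈ l := by
          rcases List.mem_cons.mp h with h | h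
          · exact absurd h hc
          · exact h
        obtain ⟨p, q, hpq, hnp⟩ := ih hb
        exact ⟨c :: p, q, by simp [hpq], by simp [hnp, hc]⟩

lemma sublist_skip {b : Bool} {w q : List Bool} :
    ∀ p : List Bool, b ∉ p → (b :: w).Sublist (p ++ b :: q) → w.Sublist q := by
  intro p
  induction p with
  | nil =>
      intro _ h
      exact tail_sublist_of_cons h
  | cons c p ih =>
      intro hnp h
      have hbc : b ≠ c := fun hh => hnp (by simp [hh])
      exact ih (fun hh => hnp (by simp [hh])) (sublist_of_ne h hbc)

lemma ballF_zero (x : List Bool) : ballF 0 x = {[]} := by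
  ext z
  simp only [mem_ballF, Finset.mem_singleton, List.length_eq_zero_iff]
  constructor
  · rintro ⟨_, h⟩; exact h
  · rintro rfl; exact ⟨List.nil_sublist x, rfl⟩

lemma ballF_full {m : ℕ} {x : List Bool} (h : x.length ≤ m) :
    (ballF m x).card ≤ 1 := by
  apply Finset.card_le_one.mpr
  intro z hz z' hz'
  rw [mem_ballF] at hz hz'
  have h1 : z = x := hz.1.eq_of_length (le_antisymm (hz.1.length_le) (by omega))
  have h2 : z' = x := hz'.1.eq_of_length (le_antisymm (hz'.1.length_le) (by omega))
  rw [h1, h2]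

lemma sum_choose_pos (m t : ℕ) : 1 ≤ ∑ i ∈ Finset.range (t + 1), m.choose i := by
  calc 1 = m.choose 0 := (Nat.choose_zero_right m).symm
  _ ≤ _ := Finset.single_le_sum (f := fun i => m.choose i) (fun _ _ => Nat.zero_le _)
      (Finset.mem_range.mpr (by omega))

lemma sum_choose_zero : ∀ K, ∑ i ∈ Finset.range (K + 1), (0 : ℕ).choose i = 1 := by
  intro K
  induction K with
  | zero => simp
  | succ K ih =>
      rw [Finset.sum_range_succ, ih]
      simp

/-- Upper bound: any binary word of length `≤ N` has at most `∑_{i≤|x|-m} C(m,i)`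
distinct subsequences of length `m`. -/
lemma ballF_card_le : ∀ N (x : List Bool), x.length ≤ N → ∀ m,
    (ballF m x).card ≤ ∑ i ∈ Finset.range (x.length - m + 1), m.choose i := by
  intro N
  induction N with
  | zero =>
      intro x hx m
      have : x = [] := List.length_eq_zero_iff.mp (by omega)
      subst this
      calc (ballF m []).card ≤ 1 := ballF_full (by simp)
      _ ≤ _ := sum_choose_pos m _
  | succ N ih =>
      intro x hx m
      by_cases hfull : x.length ≤ m
      · calc (ballF m x).card ≤ 1 := ballF_full hfull
        _ ≤ _ := sum_choose_pos m _
      push_neg at hfull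
      match m, x with
      | 0, x =>
          rw [ballF_zero]
          calc ({([] : List Bool)} : Finset (List Bool)).card = 1 := Finset.card_singleton _
          _ ≤ _ := sum_choose_pos 0 _
      | m' + 1, a :: x' =>
          by_cases hb : (!a) ∈ x'
          · obtain ⟨p, q, hpq, hnp⟩ := first_split hb
            have hsub : ballF (m' + 1) (a :: x') ⊆
                (ballF m' x').image (a :: ·) ∪ (ballF m' q).image ((!a) :: ·) := by
              intro z hz
              rw [mem_ballF] at hz
              obtain ⟨hzs, hzl⟩ := hz
              match z with
              | c :: w =>
                by_cases hca : c = a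
                · subst hca
                  have hw : w.Sublist x' := by
                    cases hzs with
                    | cons _ h => exact (List.sublist_cons_self c w).trans h
                    | cons_cons _ h => exact h
                  apply Finset.mem_union_left
                  exact Finset.mem_image.mpr ⟨w, mem_ballF.mpr ⟨hw, by simpa using hzl⟩, rfl⟩
                · have hc : c = !a := Bool.eq_not_iff.mpr hca
                  subst hc
                  have h1 : ((!a) :: w).Sublist x' :=
                    sublist_of_ne hzs (by simp)
                  rw [hpq] at h1
                  have hw : w.Sublist q := sublist_skip p hnp h1
                  apply Finset.mem_union_right
                  exact Finset.mem_image.mpr ⟨w, mem_ballF.mpr ⟨hw, by simpa using hzl⟩, rfl⟩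
            have hm'lt : m' < x'.length := by simp at hfull; omega
            have hq : q.length + 1 ≤ x'.length := by
              have := congrArg List.length hpq
              simp at this
              omega
            have hx'len : x'.length ≤ N := by simpa using hx
            have hqlen : q.length ≤ N := by omega
            have h1 := ih x' hx'len m'
            have h2 := ih q hqlen m'
            obtain ⟨s, hs⟩ : ∃ s, x'.length - m' = s + 1 := ⟨x'.length - m' - 1, by omega⟩
            have h1' : (ballF m' x').card ≤ ∑ i ∈ Finset.range (s + 2), m'.choose i := by
              have hL : x'.length - m' + 1 = s + 2 := by omega
              rwa [hL] at h1
            have h2' : (ballF m' q).card ≤ ∑ i ∈ Finset.range (s + 1), m'.choose i := by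
              refine h2.trans (Finset.sum_le_sum_of_subset ?_)
              exact Finset.range_subset_range.mpr (by omega)
            have hR : (a :: x').length - (m' + 1) + 1 = s + 2 := by simp; omega
            rw [hR, pascal_sum m' s]
            calc (ballF (m' + 1) (a :: x')).card
                ≤ ((ballF m' x').image (a :: ·) ∪ (ballF m' q).image ((!a) :: ·)).card :=
                  Finset.card_le_card hsub
              _ ≤ ((ballF m' x').image (a :: ·)).card + ((ballF m' q).image ((!a) :: ·)).card :=
                  Finset.card_union_le _ _
              _ ≤ (ballF m' x').card + (ballF m' q).card :=
                  Nat.add_le_add Finset.card_image_le Finset.card_image_le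
              _ ≤ _ := Nat.add_le_add h1' h2'
          · -- all letters of x are `a`; the ball is a subset of {replicate (m'+1) a}
            have hsub : ballF (m' + 1) (a :: x') ⊆ {List.replicate (m' + 1) a} := by
              intro z hz
              rw [mem_ballF] at hz
              obtain ⟨hzs, hzl⟩ := hz
              rw [Finset.mem_singleton, List.eq_replicate_iff]
              refine ⟨hzl, fun c hc => ?_⟩
              have hcx : c ∈ a :: x' := hzs.mem hc
              rcases List.mem_cons.mp hcx with h | h
              · exact h
              · by_contra hne
                have : c = !a := Bool.eq_not_iff.mpr hne
                exact hb (this ▸ h)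
            calc (ballF (m' + 1) (a :: x')).card ≤ 1 := by
                  simpa using Finset.card_le_card hsub
            _ ≤ _ := sum_choose_pos _ _

/-- Equality for alternating words. -/
lemma ballF_card_alt : ∀ N (x : List Bool), x.Chain' (· ≠ ·) → x.length = N → ∀ m ≤ N,
    (ballF m x).card = ∑ i ∈ Finset.range (N - m + 1), m.choose i := by
  intro N
  induction N using Nat.strong_induction_on with
  | _ N ih =>
      intro x hchain hlen m hm
      match m with
      | 0 =>
          rw [ballF_zero, Finset.card_singleton, Nat.sub_zero]
          exact (sum_choose_zero N).symm
      | m' + 1 =>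
          by_cases hfull : N ≤ m' + 1
          · have hNm : N = m' + 1 := le_antisymm hfull hm
            have hx : ballF (m' + 1) x = {x} := by
              ext z
              rw [mem_ballF, Finset.mem_singleton]
              constructor
              · rintro ⟨h1, h2⟩; exact h1.eq_of_length (by omega)
              · rintro rfl; exact ⟨List.Sublist.refl _, by omega⟩
            rw [hx, Finset.card_singleton, hNm]
            simp
          push_neg at hfull
          obtain ⟨a, y, rfl⟩ : ∃ a y, x = a :: y := by
            cases x with
            | nil => simp at hlen; omega
            | cons a y => exact ⟨a, y, rfl⟩
          obtain ⟨b, x'', rfl⟩ : ∃ b x'', y = b :: x'' := by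
            cases y with
            | nil => simp at hlen; omega
            | cons b x'' => exact ⟨b, x'', rfl⟩
          have hab : a ≠ b := (List.isChain_cons_cons.mp hchain).1
          have hchain' : (b :: x'').Chain' (· ≠ ·) := (List.isChain_cons_cons.mp hchain).2
          have hchain'' : x''.Chain' (· ≠ ·) := List.IsChain.tail hchain'
          have hkey : ballF (m' + 1) (a :: b :: x'')
              = (ballF m' (b :: x'')).image (a :: ·) ∪ (ballF m' x'').image (b :: ·) := by
            ext z
            rw [mem_ballF, Finset.mem_union]
            constructor
            · rintro ⟨hzs, hzl⟩
              match z with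
              | c :: w =>
                by_cases hca : c = a
                · subst hca
                  have hw : w.Sublist (b :: x'') := by
                    cases hzs with
                    | cons _ h => exact (List.sublist_cons_self c w).trans h
                    | cons_cons _ h => exact h
                  left
                  exact Finset.mem_image.mpr ⟨w, mem_ballF.mpr ⟨hw, by simpa using hzl⟩, rfl⟩
                · have hc : c = !a := Bool.eq_not_iff.mpr hca
                  have hcb : c = b := by
                    have hb' : b = !a := Bool.eq_not_iff.mpr (Ne.symm hab)
                    rw [hc, hb']
                  have h1 : (c :: w).Sublist (b :: x'') :=
                    sublist_of_ne hzs hca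
                  have hw : w.Sublist x'' := tail_sublist_of_cons (hcb ▸ h1)
                  right
                  exact Finset.mem_image.mpr
                    ⟨w, mem_ballF.mpr ⟨hw, by simpa using hzl⟩, by rw [hcb]⟩
            · rintro (h | h) <;> obtain ⟨w, hw, rfl⟩ := Finset.mem_image.mp h <;>
                rw [mem_ballF] at hw
              · exact ⟨List.cons_sublist_cons.mpr hw.1, by simp [hw.2]⟩
              · refine ⟨?_, by simp [hw.2]⟩
                exact List.Sublist.cons a (List.cons_sublist_cons.mpr hw.1)
          have hdisj : Disjoint ((ballF m' (b :: x'')).image (a :: ·))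
              ((ballF m' x'').image (b :: ·)) := by
            rw [Finset.disjoint_left]
            intro z h1 h2
            obtain ⟨w1, _, rfl⟩ := Finset.mem_image.mp h1
            obtain ⟨w2, _, he⟩ := Finset.mem_image.mp h2
            exact hab (by injection he.symm)
          have hlenN : x''.length + 2 = N := by simpa using hlen
          have hlen1 : (b :: x'').length = N - 1 := by simp; omega
          have hlen2 : x''.length = N - 2 := by omega
          have ih1 := ih (N - 1) (by omega) (b :: x'') hchain' hlen1 m' (by omega)
          have ih2 := ih (N - 2) (by omega) x'' hchain'' hlen2 m' (by omega)
          rw [hkey, Finset.card_union_of_disjoint hdisj,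
            Finset.card_image_of_injective _ List.cons_injective,
            Finset.card_image_of_injective _ List.cons_injective, ih1, ih2]
          obtain ⟨s, hs⟩ : ∃ s, N - (m' + 1) = s + 1 := ⟨N - (m' + 1) - 1, by omega⟩
          have e1 : N - 1 - m' + 1 = s + 2 := by omega
          have e2 : N - 2 - m' + 1 = s + 1 := by omega
          have e3 : N - (m' + 1) + 1 = s + 2 := by omega
          rw [e1, e2, e3]
          exact (pascal_sum m' s).symm

lemma altWord_length (n : ℕ) : (altWord n).length = n := by simp [altWord]

lemma altWord_chain' (n : ℕ) : (altWord n).Chain' (· ≠ ·) := by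
  rw [altWord, List.Chain', List.isChain_map]
  match n with
  | 0 => simp
  | n + 1 =>
      rw [List.isChain_range_succ]
      intro i _
      simp only [ne_eq, decide_eq_decide]
      omega

theorem stmt0 (n t : ℕ) (hn : 1 ≤ n) (ht : t ≤ n) :
    (∀ x : List Bool, x.length = n →
      (deletionBall t x).ncard ≤ ∑ i ∈ Finset.range (t + 1), (n - t).choose i) ∧
    (deletionBall t (altWord n)).ncard = ∑ i ∈ Finset.range (t + 1), (n - t).choose i := by
  constructor
  · intro x hx
    subst hx
    rw [deletionBall_eq (by omega), Set.ncard_coe_finset]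
    have h := ballF_card_le x.length x le_rfl (x.length - t)
    have he : x.length - (x.length - t) + 1 = t + 1 := by omega
    rwa [he] at h
  · rw [deletionBall_eq (by rw [altWord_length]; omega), Set.ncard_coe_finset,
      altWord_length]
    have h := ballF_card_alt n (altWord n) (altWord_chain' n) (altWord_length n)
      (n - t) (by omega)
    have he : n - (n - t) + 1 = t + 1 := by omega
    rwa [he] at h
end

section
/- (Levenshtein) Let 1 ≤ t ≤ n−1. The maximum of |D_t(x) ∩ D_t(y)| over all pairs of distinct binary words x, y of length n equals 2·D_{t−1}(n−2) = 2·Σ_{i=0}^{t−1} C(n−t−1, i). -/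
open Finset

/-- Finset of sublists of `x` of length `m`. -/
def subFinset (m : ℕ) (x : List Bool) : Finset (List Bool) :=
  (x.sublists.filter (fun z => z.length = m)).toFinset

lemma mem_subFinset {m : ℕ} {x z : List Bool} :
    z ∈ subFinset m x ↔ z.Sublist x ∧ z.length = m := by
  simp [subFinset, and_comm]

/-- The part of `w` strictly after the first occurrence of `d`. -/
def partAfter (d : Bool) (w : List Bool) : List Bool :=
  (w.dropWhile (fun c => c != d)).tail

lemma partAfter_cons_self (d : Bool) (w : List Bool) : partAfter d (d :: w) = w := by
  simp [partAfter]

lemma partAfter_cons_ne {c d : Bool} (h : c ≠ d) (w : List Bool) :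
    partAfter d (c :: w) = partAfter d w := by
  have hcd : (c != d) = true := bne_iff_ne.mpr h
  simp [partAfter, List.dropWhile, hcd]

lemma partAfter_length_le (d : Bool) (w : List Bool) :
    (partAfter d w).length ≤ w.length - 1 := by
  have h1 := (List.dropWhile_sublist (fun c => c != d) (l := w)).length_le
  have h2 := List.length_tail (l := w.dropWhile (fun c => c != d))
  unfold partAfter
  omega

lemma cons_sublist_of_ne {d a : Bool} {z w : List Bool} (h : (d :: z).Sublist (a :: w))
    (hda : d ≠ a) : (d :: z).Sublist w := by
  cases h with
  | cons _ h' => exact h'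
  | cons_cons _ h' => exact absurd rfl hda

lemma tail_sublist_partAfter : ∀ {w z : List Bool} {d : Bool},
    (d :: z).Sublist w → z.Sublist (partAfter d w) := by
  intro w
  induction w with
  | nil => intro z d h; simp at h
  | cons a w ih =>
    intro z d h
    by_cases had : a = d
    · subst had
      rw [partAfter_cons_self]
      exact List.cons_sublist_cons.mp h
    · rw [partAfter_cons_ne (Ne.symm (fun e => had e.symm)) w]
      exact ih (cons_sublist_of_ne h (fun e => had e.symm))

lemma pascalSum (k s : ℕ) :
    ∑ i ∈ range (s + 1), (k + 1).choose i
      = (∑ i ∈ range (s + 1), k.choose i) + ∑ i ∈ range s, k.choose i := by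
  induction s with
  | zero => simp
  | succ s ih =>
    rw [sum_range_succ (f := fun i => (k+1).choose i) (n := s+1), ih,
      sum_range_succ (f := fun i => k.choose i) (n := s+1),
      sum_range_succ (f := fun i => k.choose i) (n := s)]
    have : (k+1).choose (s+1) = k.choose s + k.choose (s+1) := Nat.choose_succ_succ k s
    omega

lemma subFinset_subset_singleton {m : ℕ} {w : List Bool} (h : w.length ≤ m) :
    subFinset m w ⊆ {w} := by
  intro z hz
  rw [mem_subFinset] at hz
  simp only [mem_singleton]
  exact hz.1.eq_of_length_le (by omega)

lemma one_le_sum_choose (m s : ℕ) : 1 ≤ ∑ i ∈ range (s + 1), m.choose i := by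
  calc 1 = m.choose 0 := (Nat.choose_zero_right m).symm
  _ ≤ _ := single_le_sum (f := fun i => m.choose i) (fun i _ => Nat.zero_le _)
      (mem_range.mpr (Nat.succ_pos s))

lemma ballLemma : ∀ (N : ℕ) (w : List Bool), w.length ≤ N → ∀ (m s : ℕ),
    w.length ≤ m + s → (subFinset m w).card ≤ ∑ i ∈ range (s + 1), m.choose i := by
  intro N
  induction N with
  | zero =>
    intro w hw m s _
    have : w.length ≤ m := by omega
    calc (subFinset m w).card ≤ ({w} : Finset (List Bool)).card :=
          card_le_card (subFinset_subset_singleton this)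
    _ = 1 := card_singleton w
    _ ≤ _ := one_le_sum_choose m s
  | succ N ihN =>
    intro w hw m s hms
    by_cases hwm : w.length ≤ m
    · calc (subFinset m w).card ≤ ({w} : Finset (List Bool)).card :=
            card_le_card (subFinset_subset_singleton hwm)
      _ = 1 := card_singleton w
      _ ≤ _ := one_le_sum_choose m s
    · -- w.length ≥ m + 1, so s ≥ 1 would be needed... also m ≥ 1 handled below
      match m, s with
      | 0, s =>
        have hsub : subFinset 0 w ⊆ {([] : List Bool)} := by
          intro z hz
          rw [mem_subFinset] at hz
          simp [List.length_eq_zero_iff.mp hz.2]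
        calc (subFinset 0 w).card ≤ 1 := by simpa using card_le_card hsub
        _ ≤ _ := one_le_sum_choose 0 s
      | m + 1, 0 => exact absurd (by omega : w.length ≤ m + 1) hwm
      | m + 1, s + 1 =>
        match w with
        | [] => exact absurd (by simp) hwm
        | c :: w' =>
          have hsub : subFinset (m + 1) (c :: w') ⊆
              ((subFinset m w').image (c :: ·)) ∪
              ((subFinset m (partAfter (!c) w')).image ((!c) :: ·)) := by
            intro z hz
            rw [mem_subFinset] at hz
            obtain ⟨hzs, hzl⟩ := hz
            match z with
            | [] => simp at hzl
            | e :: z' =>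
              rw [mem_union]
              by_cases hec : e = c
              · subst hec
                left
                exact mem_image_of_mem _ (mem_subFinset.mpr
                  ⟨List.cons_sublist_cons.mp hzs, by simpa using hzl⟩)
              · have he : e = !c := by
                  cases e <;> cases c <;> simp_all
                have hzw' : (e :: z').Sublist w' := cons_sublist_of_ne hzs hec
                right
                subst he
                exact mem_image_of_mem _ (mem_subFinset.mpr
                  ⟨tail_sublist_partAfter hzw', by simpa using hzl⟩)
          have hwN : w'.length ≤ N := by
            simp only [List.length_cons] at hw; omega
          have hwm' : w'.length ≤ m + (s + 1) := by
            simp only [List.length_cons] at hms; omega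
          have hc1 : (subFinset m w').card ≤ ∑ i ∈ range (s + 2), m.choose i :=
            ihN w' hwN m (s + 1) hwm'
          have hpa := partAfter_length_le (!c) w'
          have hc2 : (subFinset m (partAfter (!c) w')).card ≤ ∑ i ∈ range (s + 1), m.choose i :=
            ihN _ (by omega) m s (by omega)
          calc (subFinset (m + 1) (c :: w')).card
              ≤ _ := card_le_card hsub
            _ ≤ ((subFinset m w').image (c :: ·)).card
                + ((subFinset m (partAfter (!c) w')).image ((!c) :: ·)).card := card_union_le _ _
            _ ≤ (subFinset m w').card + (subFinset m (partAfter (!c) w')).card := by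
                exact Nat.add_le_add (card_image_le) (card_image_le)
            _ ≤ (∑ i ∈ range (s + 2), m.choose i) + ∑ i ∈ range (s + 1), m.choose i :=
                Nat.add_le_add hc1 hc2
            _ = ∑ i ∈ range (s + 2), (m + 1).choose i := (pascalSum m (s + 1)).symm

def commonF (m : ℕ) (x y : List Bool) : Finset (List Bool) := subFinset m x ∩ subFinset m y

lemma mem_commonF {m : ℕ} {x y z : List Bool} :
    z ∈ commonF m x y ↔ z.Sublist x ∧ z.Sublist y ∧ z.length = m := by
  simp only [commonF, mem_inter, mem_subFinset]
  tauto

lemma commonF_comm (m : ℕ) (x y : List Bool) : commonF m x y = commonF m y x :=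
  inter_comm _ _

lemma headCard_le (d : Bool) (m : ℕ) (x y : List Bool) (hm : 1 ≤ m) :
    ((commonF m x y).filter (fun z => z.head? = some d)).card
      ≤ (commonF (m - 1) (partAfter d x) (partAfter d y)).card := by
  apply Finset.card_le_card_of_injOn (fun z => z.tail)
  · intro z hz
    rw [Finset.mem_coe, mem_filter] at hz
    obtain ⟨hz, hhd⟩ := hz
    rw [mem_commonF] at hz
    obtain ⟨h1, h2, h3⟩ := hz
    have hz' : z = d :: z.tail := by
      match z with
      | [] => simp at h3; omega
      | a :: zt => simp only [List.head?_cons, Option.some.injEq] at hhd; rw [hhd]; rfl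
    rw [Finset.mem_coe, mem_commonF]
    rw [hz'] at h1 h2
    refine ⟨tail_sublist_partAfter h1, tail_sublist_partAfter h2, ?_⟩
    have := List.length_tail (l := z)
    show z.tail.length = m - 1
    omega
  · intro z hz z' hz' htl
    simp only [coe_filter, Set.mem_setOf_eq] at hz hz'
    obtain ⟨hz, hd⟩ := hz
    obtain ⟨hz', hd'⟩ := hz'
    rw [mem_commonF] at hz hz'
    have e1 : z = d :: z.tail := by
      match z with
      | [] => simp at hd
      | a :: zt => simp only [List.head?_cons, Option.some.injEq] at hd; rw [hd]; rfl
    have e2 : z' = d :: z'.tail := by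
      match z' with
      | [] => simp at hd'
      | a :: zt => simp only [List.head?_cons, Option.some.injEq] at hd'; rw [hd']; rfl
    rw [e1, e2]
    exact congrArg _ (by simpa using htl)

lemma headCard_ball (d : Bool) (m : ℕ) (x y : List Bool) (s : ℕ) (hm : 1 ≤ m)
    (hlen : (partAfter d x).length ≤ (m - 1) + s) :
    ((commonF m x y).filter (fun z => z.head? = some d)).card
      ≤ ∑ i ∈ range (s + 1), (m - 1).choose i := by
  calc _ ≤ (commonF (m - 1) (partAfter d x) (partAfter d y)).card := headCard_le d m x y hm
  _ ≤ (subFinset (m - 1) (partAfter d x)).card :=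
      card_le_card (inter_subset_left)
  _ ≤ _ := ballLemma _ _ le_rfl _ s hlen

lemma headCard_ball' (d : Bool) (m : ℕ) (x y : List Bool) (s : ℕ) (hm : 1 ≤ m)
    (hlen : (partAfter d y).length ≤ (m - 1) + s) :
    ((commonF m x y).filter (fun z => z.head? = some d)).card
      ≤ ∑ i ∈ range (s + 1), (m - 1).choose i := by
  rw [commonF_comm]
  exact headCard_ball d m y x s hm hlen

lemma card_head_split (m : ℕ) (x y : List Bool) (hm : 1 ≤ m) :
    (commonF m x y).card
      = ((commonF m x y).filter (fun z => z.head? = some false)).card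
        + ((commonF m x y).filter (fun z => z.head? = some true)).card := by
  have he : (commonF m x y).filter (fun z => ¬ z.head? = some false)
      = (commonF m x y).filter (fun z => z.head? = some true) := by
    apply Finset.filter_congr
    intro z hz
    rw [mem_commonF] at hz
    match z with
    | [] => exfalso; have := hz.2.2; simp at this; omega
    | a :: zt => cases a <;> simp
  rw [← he, Finset.card_filter_add_card_filter_not]

lemma sum_le_sum_choose_range (k : ℕ) {s s' : ℕ} (h : s ≤ s') :
    ∑ i ∈ range s, k.choose i ≤ ∑ i ∈ range s', k.choose i :=
  sum_le_sum_of_subset (range_subset_range.mpr h)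

lemma assembleIneq (k t' : ℕ) :
    ∑ i ∈ range t', (k + 1).choose i ≤ 2 * ∑ i ∈ range t', k.choose i := by
  match t' with
  | 0 => simp
  | s + 1 =>
    rw [pascalSum k s]
    have := sum_le_sum_choose_range k (show s ≤ s + 1 by omega)
    omega

lemma mainUB : ∀ (N : ℕ) (x y : List Bool), x.length ≤ N → x ≠ y → x.length = y.length →
    ∀ m, 1 ≤ m → m + 1 ≤ x.length →
    (commonF m x y).card ≤ 2 * ∑ i ∈ range (x.length - m), (m - 1).choose i := by
  intro N
  induction N with
  | zero =>
    intro x y hxN _ _ m _ hmn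
    omega
  | succ N ihN =>
    intro x y hxN hne hlen m hm hmn
    obtain ⟨t1, ht1⟩ : ∃ t', x.length - m = t' + 1 := ⟨x.length - m - 1, by omega⟩
    -- m = 1 case
    by_cases hm1 : m = 1
    · subst hm1
      have hsub : commonF 1 x y ⊆ {[false], [true]} := by
        intro z hz
        rw [mem_commonF] at hz
        match z with
        | [] => simp at hz
        | [a] => cases a <;> simp
        | a :: b :: zt => exfalso; have := hz.2.2; simp at this
      have h2 : (commonF 1 x y).card ≤ 2 := by
        calc (commonF 1 x y).card ≤ ({[false], [true]} : Finset (List Bool)).card :=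
              card_le_card hsub
        _ ≤ 2 := by decide
      have h3 : 1 ≤ ∑ i ∈ range (x.length - 1), ((1:ℕ) - 1).choose i := by
        rw [ht1]; exact one_le_sum_choose _ t1
      omega
    · -- m ≥ 2
      have hm2 : 2 ≤ m := by omega
      match x, y with
      | a :: xh, b :: yh =>
        have hsplit := card_head_split m (a :: xh) (b :: yh) hm
        have hsplit' : (commonF m (a :: xh) (b :: yh)).card
            = ((commonF m (a :: xh) (b :: yh)).filter (fun z => z.head? = some a)).card
              + ((commonF m (a :: xh) (b :: yh)).filter (fun z => z.head? = some (!a))).card := by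
          cases a <;> simp only [Bool.not_true, Bool.not_false] at * <;> omega
        by_cases hab : a = b
        · -- equal heads
          subst hab
          have hneh : xh ≠ yh := fun h => hne (by rw [h])
          have hTc : ((commonF m (a :: xh) (a :: yh)).filter
              (fun z => z.head? = some a)).card ≤ (commonF (m - 1) xh yh).card := by
            have := headCard_le a m (a :: xh) (a :: yh) hm
            rwa [partAfter_cons_self, partAfter_cons_self] at this
          have hrec : (commonF (m - 1) xh yh).card
              ≤ 2 * ∑ i ∈ range (xh.length - (m - 1)), (m - 2).choose i := by
            have h := ihN xh yh (by simp at hxN; omega) hneh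
              (by simp at hlen; omega) (m - 1) (by omega) (by simp at hmn; omega)
            have : m - 1 - 1 = m - 2 := by omega
            rwa [this] at h
          have hts : xh.length - (m - 1) = t1 + 1 := by
            simp only [List.length_cons] at ht1 ⊢
            omega
          rw [hts] at hrec
          by_cases ht11 : t1 = 0
          · -- t = 1 : other-head count is zero
            have hzero : ((commonF m (a :: xh) (a :: yh)).filter
                (fun z => z.head? = some (!a))).card = 0 := by
              rw [Finset.card_eq_zero]
              apply Finset.eq_empty_of_forall_notMem
              intro z hz
              rw [mem_filter, mem_commonF] at hz
              obtain ⟨⟨h1, h2, h3⟩, hhd⟩ := hz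
              match z with
              | [] => simp at hhd
              | e :: zt =>
                simp only [List.head?_cons, Option.some.injEq] at hhd
                subst hhd
                have hea : (!a) ≠ a := by simp
                have hx' : ((!a) :: zt).Sublist xh := cons_sublist_of_ne h1 hea
                have hy' : ((!a) :: zt).Sublist yh := cons_sublist_of_ne h2 hea
                have e1 := hx'.eq_of_length_le (by
                  simp only [List.length_cons] at ht1 h3 ⊢; omega)
                have e2 := hy'.eq_of_length_le (by
                  simp only [List.length_cons] at hlen ht1 h3 ⊢; omega)
                exact hneh (by rw [← e1]; exact e2)
            subst ht11
            rw [hsplit', hzero, ht1]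
            simp only [zero_add, sum_range_one, Nat.choose_zero_right] at hrec ⊢
            omega
          · -- t ≥ 2
            rcases xh with _ | ⟨a2, x2⟩
            · exfalso
              simp only [List.length_cons, List.length_nil] at hmn
              omega
            rcases yh with _ | ⟨b2, y2⟩
            · exfalso
              simp only [List.length_cons, List.length_nil] at hlen hmn
              omega
            by_cases hBoth : a2 = !a ∧ b2 = !a
            · obtain ⟨ha2, hb2⟩ := hBoth
              subst ha2; subst hb2
              have hpx : partAfter (!a) (a :: (!a) :: x2) = x2 := by
                rw [partAfter_cons_ne (by simp) _, partAfter_cons_self]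
              have hpy : partAfter (!a) (a :: (!a) :: y2) = y2 := by
                rw [partAfter_cons_ne (by simp) _, partAfter_cons_self]
              have hTd : ((commonF m (a :: (!a) :: x2) (a :: (!a) :: y2)).filter
                  (fun z => z.head? = some (!a))).card ≤ (commonF (m - 1) x2 y2).card := by
                have := headCard_le (!a) m (a :: (!a) :: x2) (a :: (!a) :: y2) hm
                rwa [hpx, hpy] at this
              have hne2 : x2 ≠ y2 := fun h => hneh (by rw [h])
              have hrec2 : (commonF (m - 1) x2 y2).card
                  ≤ 2 * ∑ i ∈ range (x2.length - (m - 1)), (m - 2).choose i := by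
                have h := ihN x2 y2 (by simp at hxN; omega) hne2
                  (by simp at hlen; omega) (m - 1) (by omega)
                  (by simp only [List.length_cons] at hmn ht1; omega)
                have : m - 1 - 1 = m - 2 := by omega
                rwa [this] at h
              have hts2 : x2.length - (m - 1) = t1 := by
                simp only [List.length_cons] at ht1 ⊢; omega
              rw [hts2] at hrec2
              have hpas : ∑ i ∈ range (t1 + 1), (m - 1).choose i
                  = (∑ i ∈ range (t1 + 1), (m - 2).choose i)
                    + ∑ i ∈ range t1, (m - 2).choose i := by
                have hm12 : m - 1 = (m - 2) + 1 := by omega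
                rw [hm12]
                exact pascalSum (m - 2) t1
              rw [hsplit', ht1, hpas]
              omega
            · -- at least one second letter equals a
              have hTd : ((commonF m (a :: a2 :: x2) (a :: b2 :: y2)).filter
                  (fun z => z.head? = some (!a))).card
                  ≤ ∑ i ∈ range (t1 - 1 + 1), (m - 1).choose i := by
                have hor : a2 = a ∨ b2 = a := by
                  revert hBoth; cases a <;> cases a2 <;> cases b2 <;> decide
                rcases hor with h2a | h2b
                · apply headCard_ball (!a) m _ _ (t1 - 1) hm
                  have e : partAfter (!a) (a :: a2 :: x2) = partAfter (!a) x2 := by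
                    rw [partAfter_cons_ne (by simp) _,
                      partAfter_cons_ne (by rw [h2a]; simp) _]
                  rw [e]
                  have := partAfter_length_le (!a) x2
                  simp only [List.length_cons] at ht1 hmn
                  omega
                · apply headCard_ball' (!a) m _ _ (t1 - 1) hm
                  have e : partAfter (!a) (a :: b2 :: y2) = partAfter (!a) y2 := by
                    rw [partAfter_cons_ne (by simp) _,
                      partAfter_cons_ne (by rw [h2b]; simp) _]
                  rw [e]
                  have := partAfter_length_le (!a) y2
                  simp only [List.length_cons] at ht1 hmn hlen
                  omega
              have ht1e : t1 - 1 + 1 = t1 := by omega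
              rw [ht1e] at hTd
              have hpas : ∑ i ∈ range (t1 + 1), (m - 1).choose i
                  = (∑ i ∈ range (t1 + 1), (m - 2).choose i)
                    + ∑ i ∈ range t1, (m - 2).choose i := by
                have hm12 : m - 1 = (m - 2) + 1 := by omega
                rw [hm12]
                exact pascalSum (m - 2) t1
              have hasm : ∑ i ∈ range t1, (m - 1).choose i
                  ≤ 2 * ∑ i ∈ range t1, (m - 2).choose i := by
                have hm12 : m - 1 = (m - 2) + 1 := by omega
                rw [hm12]
                exact assembleIneq (m - 2) t1
              rw [hsplit', ht1, hpas]
              omega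
        · -- different heads
          have hba : b = !a := by revert hab; cases a <;> cases b <;> decide
          subst hba
          have hTa : ((commonF m (a :: xh) ((!a) :: yh)).filter
              (fun z => z.head? = some a)).card
              ≤ ∑ i ∈ range (t1 + 1), (m - 1).choose i := by
            apply headCard_ball' a m _ _ t1 hm
            have e : partAfter a ((!a) :: yh) = partAfter a yh :=
              partAfter_cons_ne (by simp) _
            rw [e]
            have := partAfter_length_le a yh
            simp only [List.length_cons] at ht1 hlen
            omega
          have hTd : ((commonF m (a :: xh) ((!a) :: yh)).filter
              (fun z => z.head? = some (!a))).card
              ≤ ∑ i ∈ range (t1 + 1), (m - 1).choose i := by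
            apply headCard_ball (!a) m _ _ t1 hm
            have e : partAfter (!a) (a :: xh) = partAfter (!a) xh :=
              partAfter_cons_ne (by simp) _
            rw [e]
            have := partAfter_length_le (!a) xh
            simp only [List.length_cons] at ht1
            omega
          rw [hsplit', ht1]
          omega

/-- The alternating word of length `n` starting with `b`. -/
def alt : ℕ → Bool → List Bool
  | 0, _ => []
  | n + 1, b => b :: alt n (!b)

lemma alt_length (n : ℕ) (b : Bool) : (alt n b).length = n := by
  induction n generalizing b with
  | zero => rfl
  | succ n ih => simp [alt, ih]

/-- Decode a (head, same/diff-pattern) pair into a word; `true` in the pattern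
means "repeat the previous letter". -/
def decode : Bool → List Bool → List Bool
  | b, [] => [b]
  | b, p :: ps => b :: decode (cond p b (!b)) ps

lemma decode_length (b : Bool) (ps : List Bool) : (decode b ps).length = ps.length + 1 := by
  induction ps generalizing b with
  | nil => rfl
  | cons p ps ih => simp [decode, ih]

lemma decode_embed : ∀ (L : ℕ) (ps : List Bool) (b c : Bool),
    ps.length + 1 + ps.count true + (if b = c then 0 else 1) ≤ L →
    (decode b ps).Sublist (alt L c) := by
  intro L
  induction L with
  | zero =>
    intro ps b c h
    by_cases hbc : b = c <;> simp [hbc] at h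
  | succ L ih =>
    intro ps b c h
    by_cases hbc : b = c
    · subst hbc
      show (decode b ps).Sublist (b :: alt L (!b))
      match ps with
      | [] => exact List.cons_sublist_cons.mpr (List.nil_sublist _)
      | p :: ps' =>
        show (b :: decode (cond p b (!b)) ps').Sublist (b :: alt L (!b))
        apply List.cons_sublist_cons.mpr
        cases p
        · -- change
          show (decode (!b) ps').Sublist (alt L (!b))
          apply ih ps' (!b) (!b)
          rw [if_pos rfl]
          rw [if_pos rfl] at h
          simp only [List.count_cons, List.length_cons] at h
          simp at h
          omega
        · -- same letter, host head changes: mismatch costs 1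
          show (decode b ps').Sublist (alt L (!b))
          apply ih ps' b (!b)
          rw [if_neg (by simp)]
          rw [if_pos rfl] at h
          simp only [List.count_cons, List.length_cons] at h
          simp at h
          omega
    · show (decode b ps).Sublist (c :: alt L (!c))
      apply List.Sublist.cons
      apply ih ps b (!c)
      have hb : b = !c := by revert hbc; cases b <;> cases c <;> decide
      rw [if_pos hb]
      rw [if_neg hbc] at h
      omega

lemma decode_inj : ∀ (ps ps' : List Bool) (b b' : Bool),
    decode b ps = decode b' ps' → b = b' ∧ ps = ps' := by
  intro ps
  induction ps with
  | nil =>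
    intro ps' b b' h
    match ps' with
    | [] => simp [decode] at h; exact ⟨h, rfl⟩
    | p' :: q' =>
      exfalso
      have h1 := congrArg List.length h
      simp [decode_length] at h1
  | cons p q ih =>
    intro ps' b b' h
    match ps' with
    | [] =>
      exfalso
      have h1 := congrArg List.length h
      simp [decode_length] at h1
    | p' :: q' =>
      rw [decode, decode] at h
      simp only [List.cons.injEq] at h
      obtain ⟨hb, htail⟩ := h
      subst hb
      obtain ⟨hif, hq⟩ := ih q' _ _ htail
      subst hq
      refine ⟨rfl, ?_⟩
      have hp : p = p' := by
        revert hif; cases p <;> cases p' <;> cases b <;> decide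
      rw [hp]

lemma countP_range (p : ℕ → Bool) : ∀ ℓ : ℕ,
    (List.range ℓ).countP p = ((Finset.range ℓ).filter (fun i => p i)).card
  | 0 => rfl
  | ℓ + 1 => by
    rw [List.range_succ, List.countP_append, countP_range p ℓ, Finset.range_add_one,
      Finset.filter_insert]
    by_cases hp : p ℓ
    · rw [if_pos hp, Finset.card_insert_of_notMem (by simp)]
      simp [List.countP_cons, hp]
    · rw [if_neg hp]
      simp [List.countP_cons, hp]

lemma count_true_pattern (ℓ : ℕ) (S : Finset ℕ) (hS : S ⊆ Finset.range ℓ) :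
    ((List.range ℓ).map (fun i => decide (i ∈ S))).count true = S.card := by
  rw [List.count_eq_countP, List.countP_map]
  have he : ((fun x => x == true) ∘ fun i => decide (i ∈ S)) = fun i => decide (i ∈ S) := by
    funext i; simp
  rw [he, countP_range]
  have h2 : (Finset.range ℓ).filter (fun i => decide (i ∈ S)) = Finset.range ℓ ∩ S := by
    rw [← Finset.filter_mem_eq_inter]
    apply Finset.filter_congr
    intro i _
    simp
  rw [h2, Finset.inter_eq_right.mpr hS]

lemma card_small_powerset (ℓ k : ℕ) :
    ((Finset.range ℓ).powerset.filter (fun S => S.card ≤ k)).card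
      = ∑ i ∈ range (k + 1), ℓ.choose i := by
  have he : (Finset.range ℓ).powerset.filter (fun S => S.card ≤ k)
      = (range (k + 1)).biUnion (fun i => Finset.powersetCard i (Finset.range ℓ)) := by
    ext S
    simp only [mem_filter, mem_powerset, mem_biUnion, mem_range, Finset.mem_powersetCard]
    constructor
    · rintro ⟨h1, h2⟩
      exact ⟨S.card, by omega, h1, rfl⟩
    · rintro ⟨i, hi, h1, h2⟩
      exact ⟨h1, by omega⟩
  rw [he, Finset.card_biUnion]
  · apply Finset.sum_congr rfl
    intro i _
    rw [Finset.card_powersetCard, Finset.card_range]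
  · intro i _ j _ hij
    rw [Function.onFun, Finset.disjoint_left]
    intro S hS hS'
    rw [Finset.mem_powersetCard] at hS hS'
    exact hij (by rw [← hS.2, hS'.2])

lemma lowerB (m t : ℕ) (hm : 1 ≤ m) (ht : 1 ≤ t) :
    2 * ∑ i ∈ range t, (m - 1).choose i
      ≤ (commonF m (alt (m + t) false) (alt (m + t) true)).card := by
  classical
  set D := (Finset.univ : Finset Bool) ×ˢ
    ((Finset.range (m - 1)).powerset.filter (fun S => S.card ≤ t - 1)) with hD
  have hcard : D.card = 2 * ∑ i ∈ range t, (m - 1).choose i := by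
    rw [hD, Finset.card_product, card_small_powerset]
    have h1 : (Finset.univ : Finset Bool).card = 2 := by decide
    have h2 : t - 1 + 1 = t := by omega
    rw [h1, h2]
  rw [← hcard]
  apply Finset.card_le_card_of_injOn
    (fun bs => decode bs.1 ((List.range (m - 1)).map (fun i => decide (i ∈ bs.2))))
  · rintro ⟨b, S⟩ hbs
    simp only [hD, Finset.mem_coe, Finset.mem_product, mem_filter, mem_powerset] at hbs
    obtain ⟨-, hSsub, hScard⟩ := hbs
    rw [Finset.mem_coe, mem_commonF]
    have hplen : ((List.range (m - 1)).map fun i => decide (i ∈ S)).length = m - 1 := by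
      simp
    have hcnt := count_true_pattern (m - 1) S hSsub
    have hbudget : ∀ c : Bool,
        ((List.range (m - 1)).map fun i => decide (i ∈ S)).length + 1
          + ((List.range (m - 1)).map fun i => decide (i ∈ S)).count true
          + (if b = c then 0 else 1) ≤ m + t := by
      intro c
      have : (if b = c then 0 else 1) ≤ 1 := by split <;> omega
      rw [hplen, hcnt]
      omega
    refine ⟨decode_embed (m + t) _ b false (hbudget false),
      decode_embed (m + t) _ b true (hbudget true), ?_⟩
    rw [decode_length, hplen]
    omega
  · rintro ⟨b, S⟩ hbs ⟨b', S'⟩ hbs' heq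
    simp only [hD, Finset.coe_product, Set.mem_prod, Finset.mem_coe, mem_filter,
      mem_powerset] at hbs hbs'
    obtain ⟨-, hSsub, -⟩ := hbs
    obtain ⟨-, hSsub', -⟩ := hbs'
    obtain ⟨hb, hmap⟩ := decode_inj _ _ _ _ heq
    have hptw := List.map_inj_left.mp hmap
    have hSS : S = S' := by
      ext i
      constructor
      · intro hi
        have hir : i ∈ List.range (m - 1) :=
          List.mem_range.mpr (Finset.mem_range.mp (hSsub hi))
        have := hptw i hir
        simpa [hi] using this.symm
      · intro hi
        have hir : i ∈ List.range (m - 1) :=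
          List.mem_range.mpr (Finset.mem_range.mp (hSsub' hi))
        have := hptw i hir
        simpa [hi] using this
    rw [Prod.mk.injEq]
    exact ⟨hb, hSS⟩

lemma ball_inter_eq (t : ℕ) (x y : List Bool) (n : ℕ) (hx : x.length = n)
    (hy : y.length = n) (ht : t ≤ n) :
    deletionBall t x ∩ deletionBall t y = ↑(commonF (n - t) x y) := by
  ext z
  constructor
  · rintro ⟨⟨h1, h2⟩, h3, h4⟩
    rw [Finset.mem_coe, mem_commonF]
    exact ⟨h1, h3, by omega⟩
  · intro hz
    rw [Finset.mem_coe, mem_commonF] at hz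
    obtain ⟨h1, h2, h3⟩ := hz
    exact ⟨⟨h1, by omega⟩, h2, by omega⟩

/-- Levenshtein: for `1 ≤ t ≤ n-1`, the maximum of `|D_t(x) ∩ D_t(y)|` over distinct
binary words `x, y` of length `n` equals `2·D_{t-1}(n-2) = 2·∑_{i=0}^{t-1} C(n-t-1, i)`. -/
theorem stmt1 (n t : ℕ) (ht1 : 1 ≤ t) (ht2 : t ≤ n - 1) :
    (∀ x y : List Bool, x.length = n → y.length = n → x ≠ y →
      (deletionBall t x ∩ deletionBall t y).ncard ≤
        2 * ∑ i ∈ Finset.range t, (n - t - 1).choose i) ∧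
    (∃ x y : List Bool, x.length = n ∧ y.length = n ∧ x ≠ y ∧
      (deletionBall t x ∩ deletionBall t y).ncard =
        2 * ∑ i ∈ Finset.range t, (n - t - 1).choose i) := by
  have hn2 : 2 ≤ n := by omega
  have htn : t ≤ n := by omega
  have hm1 : 1 ≤ n - t := by omega
  constructor
  · intro x y hx hy hxy
    rw [ball_inter_eq t x y n hx hy htn, Set.ncard_coe_finset]
    have h := mainUB x.length x y le_rfl hxy (by rw [hx, hy]) (n - t) hm1
      (by omega : n - t + 1 ≤ x.length)
    rw [hx] at h
    have e1 : n - (n - t) = t := by omega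
    rw [e1] at h
    exact h
  · have hne : alt n false ≠ alt n true := by
      obtain ⟨k, rfl⟩ : ∃ k, n = k + 1 := ⟨n - 1, by omega⟩
      simp [alt]
    refine ⟨alt n false, alt n true, alt_length n false, alt_length n true, hne, ?_⟩
    rw [ball_inter_eq t _ _ n (alt_length n false) (alt_length n true) htn,
      Set.ncard_coe_finset]
    apply le_antisymm
    · have h := mainUB (alt n false).length (alt n false) (alt n true) le_rfl hne
        (by rw [alt_length, alt_length]) (n - t) hm1 (by rw [alt_length]; omega)
      rw [alt_length] at h
      have e1 : n - (n - t) = t := by omega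
      rw [e1] at h
      exact h
    · have h := lowerB (n - t) t hm1 ht1
      have e : n - t + t = n := by omega
      rw [e] at h
      exact h
end

section
/- Let x and y be distinct binary words of the same length n ≥ 1. Then |D_1(x) ∩ D_1(y)| = 2 if and only if x and y are Type-A-confusable. -/
/-- `x` and `y` are Type-A-confusable: `x = u·a·v` and `y = u·ā·v` for an
alternating word `a` of length at least 2. -/
def TypeAConfusable (x y : List Bool) : Prop :=
  ∃ u a v : List Bool, 2 ≤ a.length ∧ List.Chain' (· ≠ ·) a ∧
    x = u ++ a ++ v ∧ y = u ++ a.map (!·) ++ v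

lemma ext_getD {l₁ l₂ : List Bool} (hl : l₁.length = l₂.length)
    (h : ∀ k, l₁.getD k false = l₂.getD k false) : l₁ = l₂ := by
  apply List.ext_getElem hl
  intro k h1 h2
  have := h k
  rwa [List.getD_eq_getElem _ _ h1, List.getD_eq_getElem _ _ h2] at this

lemma getD_eraseIdx {l : List Bool} {i : ℕ} (hi : i < l.length) (k : ℕ) :
    (l.eraseIdx i).getD k false = if k < i then l.getD k false else l.getD (k+1) false := by
  have hlen : (l.eraseIdx i).length = l.length - 1 := by
    rw [List.length_eraseIdx]; simp [hi]
  by_cases hk : k < l.length - 1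
  · rw [List.getD_eq_getElem _ _ (by omega : k < (l.eraseIdx i).length),
      List.getElem_eraseIdx]
    split
    · rw [List.getD_eq_getElem _ _ (by omega)]
    · rw [List.getD_eq_getElem _ _ (by omega)]
  · rw [List.getD_eq_default _ _ (by omega)]
    have hki : ¬ k < i := by omega
    simp only [hki, if_false]
    rw [List.getD_eq_default _ _ (by omega)]

lemma sublist_eraseIdx {z x : List Bool} (h : z.Sublist x) (hl : z.length + 1 = x.length) :
    ∃ p, p < x.length ∧ z = x.eraseIdx p := by
  induction h with
  | slnil => simp at hl
  | @cons z' l a h ih =>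
    have : z'.length = l.length := by simp at hl; omega
    exact ⟨0, by simp, by simpa using (h.eq_of_length this)⟩
  | @cons_cons z' l a h ih =>
    obtain ⟨p, hp, hz⟩ := ih (by simpa using hl)
    exact ⟨p+1, by simpa using hp, by simp [List.eraseIdx_cons_succ, hz]⟩

lemma mem_ball_iff {x z : List Bool} (hn : 1 ≤ x.length) :
    z ∈ deletionBall 1 x ↔ ∃ p, p < x.length ∧ z = x.eraseIdx p := by
  constructor
  · rintro ⟨hs, hl⟩; exact sublist_eraseIdx hs hl
  · rintro ⟨p, hp, rfl⟩
    refine ⟨List.eraseIdx_sublist _ _, ?_⟩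
    rw [List.length_eraseIdx]; simp [hp]; omega

lemma key {x y : List Bool} (hlen : x.length = y.length)
    {i j : ℕ} (hin : i < x.length) (hjn : j < x.length) (hij : i ≤ j)
    (hi : x.getD i false ≠ y.getD i false) (hj : x.getD j false ≠ y.getD j false)
    (hout : ∀ k, k < i ∨ j < k → x.getD k false = y.getD k false)
    (z : List Bool) :
    z ∈ deletionBall 1 x ∩ deletionBall 1 y ↔
      ((∀ k, i ≤ k → k < j → x.getD (k+1) false = y.getD k false) ∧ z = x.eraseIdx i) ∨
      ((∀ k, i ≤ k → k < j → y.getD (k+1) false = x.getD k false) ∧ z = x.eraseIdx j) := by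
  have hn : 1 ≤ x.length := by omega
  have hn' : 1 ≤ y.length := by omega
  constructor
  · rintro ⟨hzx, hzy⟩
    obtain ⟨p, hp, rfl⟩ := (mem_ball_iff hn).mp hzx
    obtain ⟨q, hq, hq'⟩ := (mem_ball_iff hn').mp hzy
    -- pointwise consequence
    have E : ∀ k, (if k < p then x.getD k false else x.getD (k+1) false)
        = (if k < q then y.getD k false else y.getD (k+1) false) := by
      intro k
      rw [← getD_eraseIdx hp k, ← getD_eraseIdx (by omega : q < y.length) k, ← hq']
    rcases le_or_gt p q with hpq | hpq
    · -- left branch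
      have hpi : p ≤ i := by
        by_contra h
        have := E i
        rw [if_pos (by omega), if_pos (by omega)] at this
        exact hi this
      have hjq : j ≤ q := by
        by_contra h
        have := E (j-1)
        rw [if_neg (by omega), if_neg (by omega)] at this
        have hj1 : j - 1 + 1 = j := by omega
        rw [hj1] at this
        exact hj this
      left
      constructor
      · intro k hk1 hk2
        have := E k
        rwa [if_neg (by omega), if_pos (by omega)] at this
      · apply ext_getD
        · rw [List.length_eraseIdx, List.length_eraseIdx]; simp [hp, hin]
        · intro k
          rw [getD_eraseIdx hp, getD_eraseIdx hin]
          rcases lt_trichotomy k p with h1 | h1 | h1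
          · rw [if_pos h1, if_pos (by omega)]
          · subst h1
            by_cases h2 : k < i
            · rw [if_neg (by omega), if_pos h2]
              have := E k
              rw [if_neg (by omega), if_pos (by omega)] at this
              rw [this, hout k (Or.inl h2)]
            · rw [if_neg (by omega), if_neg h2]
          · by_cases h2 : k < i
            · rw [if_neg (by omega), if_pos h2]
              have := E k
              rw [if_neg (by omega), if_pos (by omega)] at this
              rw [this, hout k (Or.inl h2)]
            · rw [if_neg (by omega), if_neg h2]
    · -- right branch
      have hqi : q ≤ i := by
        by_contra h
        have := E i
        rw [if_pos (by omega), if_pos (by omega)] at this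
        exact hi this
      have hjp : j ≤ p := by
        by_contra h
        have := E (j-1)
        rw [if_neg (by omega), if_neg (by omega)] at this
        have hj1 : j - 1 + 1 = j := by omega
        rw [hj1] at this
        exact hj this
      right
      constructor
      · intro k hk1 hk2
        have := E k
        rw [if_pos (by omega), if_neg (by omega)] at this
        exact this.symm
      · rw [hq']
        apply ext_getD
        · rw [List.length_eraseIdx, List.length_eraseIdx]
          simp [hjn, (by omega : q < y.length)]; omega
        · intro k
          rw [getD_eraseIdx (by omega : q < y.length), getD_eraseIdx hjn]
          by_cases h1 : k < q
          · rw [if_pos h1, if_pos (by omega), hout k (Or.inl (by omega))]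
          · by_cases h2 : k < j
            · rw [if_neg h1, if_pos h2]
              have := E k
              rw [if_pos (by omega), if_neg (by omega)] at this
              exact this.symm
            · rw [if_neg h1, if_neg h2, hout (k+1) (Or.inr (by omega))]
  · -- backward
    have ha : x.eraseIdx i ∈ deletionBall 1 x := (mem_ball_iff hn).mpr ⟨i, hin, rfl⟩
    have hb : x.eraseIdx j ∈ deletionBall 1 x := (mem_ball_iff hn).mpr ⟨j, hjn, rfl⟩
    rintro (⟨hA, rfl⟩ | ⟨hB, rfl⟩)
    · refine ⟨ha, (mem_ball_iff hn').mpr ⟨j, by omega, ?_⟩⟩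
      apply ext_getD
      · rw [List.length_eraseIdx, List.length_eraseIdx]
        simp [hin, (by omega : j < y.length)]; omega
      · intro k
        rw [getD_eraseIdx hin, getD_eraseIdx (by omega : j < y.length)]
        by_cases h1 : k < i
        · rw [if_pos h1, if_pos (by omega), hout k (Or.inl h1)]
        · by_cases h2 : k < j
          · rw [if_neg h1, if_pos h2]; exact hA k (by omega) h2
          · rw [if_neg h1, if_neg h2, hout (k+1) (Or.inr (by omega))]
    · refine ⟨hb, (mem_ball_iff hn').mpr ⟨i, by omega, ?_⟩⟩
      apply ext_getD
      · rw [List.length_eraseIdx, List.length_eraseIdx]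
        simp [hjn, (by omega : i < y.length)]; omega
      · intro k
        rw [getD_eraseIdx hjn, getD_eraseIdx (by omega : i < y.length)]
        by_cases h1 : k < i
        · rw [if_pos (by omega), if_pos h1, hout k (Or.inl h1)]
        · by_cases h2 : k < j
          · rw [if_pos h2, if_neg h1]; exact (hB k (by omega) h2).symm
          · rw [if_neg (by omega), if_neg h1, hout (k+1) (Or.inr (by omega))]

lemma getD_append' (l1 l2 : List Bool) (k : ℕ) :
    (l1 ++ l2).getD k false =
      if k < l1.length then l1.getD k false else l2.getD (k - l1.length) false := by
  by_cases h : k < l1.length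
  · rw [if_pos h, List.getD_eq_getElem _ _ (by simp; omega), List.getElem_append,
      dif_pos h, List.getD_eq_getElem _ _ h]
  · rw [if_neg h]
    by_cases h2 : k < l1.length + l2.length
    · rw [List.getD_eq_getElem _ _ (by simp; omega), List.getElem_append, dif_neg h,
        List.getD_eq_getElem _ _ (by omega)]
    · rw [List.getD_eq_default _ _ (by simp; omega), List.getD_eq_default _ _ (by omega)]

lemma chain'_ne_iff_getD {a : List Bool} :
    List.Chain' (· ≠ ·) a ↔ ∀ k, k + 1 < a.length → a.getD k false ≠ a.getD (k+1) false := by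
  rw [show List.Chain' (· ≠ ·) a ↔ List.IsChain (· ≠ ·) a from Iff.rfl, List.isChain_iff_getElem]
  constructor
  · intro h k hk
    have := h k (by omega)
    rwa [← List.getD_eq_getElem _ false (by omega),
      ← List.getD_eq_getElem _ false hk] at this
  · intro h k hk
    have := h k (by omega)
    rwa [List.getD_eq_getElem _ false (by omega), List.getD_eq_getElem _ false (by omega)] at this

lemma getD_map_not (a : List Bool) (k : ℕ) :
    (a.map (!·)).getD k false = if k < a.length then !(a.getD k false) else false := by
  by_cases h : k < a.length
  · rw [if_pos h, List.getD_eq_getElem _ _ (by simpa using h), List.getElem_map,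
      List.getD_eq_getElem _ _ h]
  · rw [if_neg h, List.getD_eq_default _ _ (by simpa using h)]


lemma bool_ne_elim1 {b c : Bool} (h : b ≠ c) : c = !b := by
  cases b <;> cases c <;> simp_all

lemma bool_ne_elim2 {b c : Bool} (h : b ≠ c) : !c = b := by
  cases b <;> cases c <;> simp_all

lemma backward {x y : List Bool} (hlen : x.length = y.length)
    (h : TypeAConfusable x y) :
    (deletionBall 1 x ∩ deletionBall 1 y).ncard = 2 := by
  obtain ⟨u, a, v, ha2, hch, hxe, hye⟩ := h
  have hxlen : x.length = u.length + a.length + v.length := by simp [hxe]; ring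
  have hxd : ∀ k, x.getD k false =
      if k < u.length then u.getD k false
      else if k < u.length + a.length then a.getD (k - u.length) false
      else v.getD (k - (u.length + a.length)) false := by
    intro k
    rw [hxe, getD_append' (u ++ a) v, getD_append' u a]
    simp only [List.length_append]
    by_cases h1 : k < u.length
    · simp only [if_pos h1, if_pos (show k < u.length + a.length by omega)]
    · simp only [if_neg h1]
  have hyd : ∀ k, y.getD k false =
      if k < u.length then u.getD k false
      else if k < u.length + a.length then !(a.getD (k - u.length) false)
      else v.getD (k - (u.length + a.length)) false := by
    intro k
    rw [hye, getD_append' (u ++ a.map (!·)) v, getD_append' u (a.map (!·)), getD_map_not]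
    simp only [List.length_append, List.length_map]
    by_cases h1 : k < u.length
    · simp only [if_pos h1, if_pos (show k < u.length + a.length by omega)]
    · simp only [if_neg h1]
      by_cases h2 : k < u.length + a.length
      · simp only [if_pos h2, if_pos (show k - u.length < a.length by omega)]
      · simp only [if_neg h2, if_neg (show ¬ k - u.length < a.length by omega)]
  have hch' := chain'_ne_iff_getD.mp hch
  have hin : u.length < x.length := by omega
  have hjn : u.length + a.length - 1 < x.length := by omega
  have hij : u.length < u.length + a.length - 1 := by omega
  have hmid : ∀ k, u.length ≤ k → k < u.length + a.length →
      x.getD k false ≠ y.getD k false := by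
    intro k h1 h2
    rw [hxd, hyd]
    simp only [if_neg (show ¬ k < u.length by omega), if_pos h2]
    intro hc
    cases h3 : a.getD (k - u.length) false <;> simp [h3] at hc
  have hout : ∀ k, k < u.length ∨ u.length + a.length - 1 < k →
      x.getD k false = y.getD k false := by
    intro k hk
    rw [hxd, hyd]
    by_cases h1 : k < u.length
    · simp only [if_pos h1]
    · simp only [if_neg h1, if_neg (show ¬ k < u.length + a.length by omega)]
  have hA : ∀ k, u.length ≤ k → k < u.length + a.length - 1 →
      x.getD (k+1) false = y.getD k false := by
    intro k h1 h2
    rw [hxd, hyd]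
    simp only [if_neg (show ¬ k + 1 < u.length by omega),
      if_pos (show k + 1 < u.length + a.length by omega),
      if_neg (show ¬ k < u.length by omega),
      if_pos (show k < u.length + a.length by omega)]
    have := hch' (k - u.length) (by omega)
    have he : k + 1 - u.length = (k - u.length) + 1 := by omega
    rw [he]
    cases h3 : a.getD (k - u.length) false <;> cases h4 : a.getD (k - u.length + 1) false <;>
      first | rfl | exact absurd (h3.trans h4.symm) this
  have hB : ∀ k, u.length ≤ k → k < u.length + a.length - 1 →
      y.getD (k+1) false = x.getD k false := by
    intro k h1 h2
    rw [hxd, hyd]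
    simp only [if_neg (show ¬ k + 1 < u.length by omega),
      if_pos (show k + 1 < u.length + a.length by omega),
      if_neg (show ¬ k < u.length by omega),
      if_pos (show k < u.length + a.length by omega)]
    have := hch' (k - u.length) (by omega)
    have he : k + 1 - u.length = (k - u.length) + 1 := by omega
    rw [he]
    cases h3 : a.getD (k - u.length) false <;> cases h4 : a.getD (k - u.length + 1) false <;>
      first | rfl | exact absurd (h3.trans h4.symm) this
  have hS : deletionBall 1 x ∩ deletionBall 1 y =
      {x.eraseIdx u.length, x.eraseIdx (u.length + a.length - 1)} := by
    ext z
    rw [Set.mem_insert_iff, Set.mem_singleton_iff,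
      key hlen hin hjn (le_of_lt hij) (hmid u.length le_rfl (by omega))
        (hmid (u.length + a.length - 1) (by omega) (by omega)) hout z]
    constructor
    · rintro (⟨_, rfl⟩ | ⟨_, rfl⟩) <;> simp
    · rintro (rfl | rfl)
      · exact Or.inl ⟨hA, rfl⟩
      · exact Or.inr ⟨hB, rfl⟩
  rw [hS]
  apply Set.ncard_pair
  intro hcon
  have h5 := congrArg (fun l => l.getD u.length false) hcon
  rw [getD_eraseIdx hin, getD_eraseIdx hjn] at h5
  simp only [if_neg (show ¬ u.length < u.length by omega), if_pos hij] at h5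
  rw [hxd, hxd] at h5
  simp only [if_neg (show ¬ u.length + 1 < u.length by omega),
    if_pos (show u.length + 1 < u.length + a.length by omega),
    if_neg (show ¬ u.length < u.length by omega),
    if_pos (show u.length < u.length + a.length by omega)] at h5
  have he1 : u.length + 1 - u.length = 0 + 1 := by omega
  have he2 : u.length - u.length = 0 := by omega
  rw [he1, he2] at h5
  exact hch' 0 (by omega) h5.symm


lemma build {x y : List Bool} (hlen : x.length = y.length) {i j : ℕ}
    (hi_lt : i < x.length) (hj_lt : j < x.length) (hij : i < j)
    (hi_ne : x.getD i false ≠ y.getD i false)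
    (hout : ∀ k, k < i ∨ j < k → x.getD k false = y.getD k false)
    (hA : ∀ k, i ≤ k → k < j → x.getD (k+1) false = y.getD k false)
    (hB : ∀ k, i ≤ k → k < j → y.getD (k+1) false = x.getD k false) :
    TypeAConfusable x y := by
  have C : ∀ k, i ≤ k → k ≤ j → y.getD k false = !(x.getD k false) := by
    intro k hk
    induction k, hk using Nat.le_induction with
    | base =>
      intro _
      cases h3 : x.getD i false <;> cases h4 : y.getD i false <;>
        first | rfl | exact absurd (h3.trans h4.symm) hi_ne
    | succ k hk ih =>
      intro hkj
      have ihk := ih (by omega)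
      have hxk : x.getD (k+1) false = !(x.getD k false) := by
        rw [hA k hk (by omega), ihk]
      rw [hB k hk (by omega), hxk, Bool.not_not]
  have Alt : ∀ k, i ≤ k → k < j → x.getD (k+1) false = !(x.getD k false) := by
    intro k h1 h3
    rw [hA k h1 h3, C k h1 (by omega)]
  refine ⟨x.take i, (x.drop i).take (j+1-i), x.drop (j+1), ?_, ?_, ?_, ?_⟩
  · simp only [List.length_take, List.length_drop]
    omega
  · -- Chain'
    have hal : ((x.drop i).take (j+1-i)).length = j+1-i := by
      simp only [List.length_take, List.length_drop]; omega
    have agetD : ∀ m, m < j+1-i →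
        ((x.drop i).take (j+1-i)).getD m false = x.getD (i+m) false := by
      intro m hm
      rw [List.getD_eq_getElem _ _ (by omega), List.getElem_take, List.getElem_drop,
        List.getD_eq_getElem _ _ (by omega)]
    rw [chain'_ne_iff_getD]
    intro m hm
    rw [hal] at hm
    rw [agetD m (by omega), agetD (m+1) (by omega)]
    have := Alt (i+m) (by omega) (by omega)
    rw [show i + (m+1) = (i+m)+1 by omega, this]
    cases x.getD (i+m) false <;> simp
  · -- x decomposition
    rw [List.append_assoc]
    have hd : x.drop (j+1) = (x.drop i).drop (j+1-i) := by
      rw [List.drop_drop]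
      congr 1
      omega
    rw [hd, List.take_append_drop (j+1-i) (x.drop i), List.take_append_drop i x]
  · -- y decomposition
    have hu : (x.take i).length = i := by simp only [List.length_take]; omega
    have hal : ((x.drop i).take (j+1-i)).length = j+1-i := by
      simp only [List.length_take, List.length_drop]; omega
    have agetD : ∀ m, m < j+1-i →
        ((x.drop i).take (j+1-i)).getD m false = x.getD (i+m) false := by
      intro m hm
      rw [List.getD_eq_getElem _ _ (by omega), List.getElem_take, List.getElem_drop,
        List.getD_eq_getElem _ _ (by omega)]
    apply ext_getD
    · simp only [List.length_append, List.length_map, List.length_take, List.length_drop]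
      omega
    · intro k
      rw [getD_append' (x.take i ++ ((x.drop i).take (j+1-i)).map (!·)) (x.drop (j+1)),
        getD_append' (x.take i) (((x.drop i).take (j+1-i)).map (!·)), getD_map_not]
      simp only [List.length_append, List.length_map, hu, hal]
      by_cases h1 : k < i
      · rw [if_pos (show k < i + (j+1-i) by omega), if_pos h1, ← hout k (Or.inl h1),
          List.getD_eq_getElem _ _ (show k < (x.take i).length by omega),
          List.getElem_take, List.getD_eq_getElem _ _ (by omega)]
      · by_cases h3 : k ≤ j
        · rw [if_pos (show k < i + (j+1-i) by omega), if_neg h1,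
            if_pos (show k - i < j+1-i by omega),
            agetD (k - i) (by omega), show i + (k - i) = k by omega,
            C k (by omega) h3]
        · rw [if_neg (show ¬ k < i + (j+1-i) by omega)]
          by_cases h4 : k < x.length
          · rw [← hout k (Or.inr (by omega)),
              List.getD_eq_getElem _ _ (show k - (i + (j+1-i)) < (x.drop (j+1)).length by
                simp only [List.length_drop]; omega),
              List.getElem_drop, List.getD_eq_getElem _ _ (by omega)]
            congr 1
            omega
          · rw [List.getD_eq_default _ _ (by omega), List.getD_eq_default _ _ (by
              simp only [List.length_drop]; omega)]

lemma forward {x y : List Bool} (hlen : x.length = y.length) (hxy : x ≠ y)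
    (h2 : (deletionBall 1 x ∩ deletionBall 1 y).ncard = 2) : TypeAConfusable x y := by
  classical
  set M := (Finset.range x.length).filter
    (fun k => ¬ (x.getD k false = y.getD k false)) with hM
  have hne : M.Nonempty := by
    rw [Finset.filter_nonempty_iff]
    by_contra hc
    push_neg at hc
    apply hxy
    apply ext_getD hlen
    intro k
    by_cases hk : k < x.length
    · exact hc k (Finset.mem_range.mpr hk)
    · rw [List.getD_eq_default _ _ (by omega), List.getD_eq_default _ _ (by omega)]
  obtain ⟨i, himem, himin⟩ : ∃ i, i ∈ M ∧ ∀ k ∈ M, i ≤ k :=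
    ⟨M.min' hne, M.min'_mem hne, fun k hk => M.min'_le k hk⟩
  obtain ⟨j, hjmem, hjmax⟩ : ∃ j, j ∈ M ∧ ∀ k ∈ M, k ≤ j :=
    ⟨M.max' hne, M.max'_mem hne, fun k hk => M.le_max' k hk⟩
  rw [hM, Finset.mem_filter, Finset.mem_range] at himem hjmem
  obtain ⟨hi_lt, hi_ne⟩ := himem
  obtain ⟨hj_lt, hj_ne⟩ := hjmem
  have hij : i ≤ j := himin j (by rw [hM, Finset.mem_filter, Finset.mem_range]; exact ⟨hj_lt, hj_ne⟩)
  have hout : ∀ k, k < i ∨ j < k → x.getD k false = y.getD k false := by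
    intro k hk
    by_cases hkl : k < x.length
    · by_contra hc
      have hkM : k ∈ M := by rw [hM, Finset.mem_filter, Finset.mem_range]; exact ⟨hkl, hc⟩
      rcases hk with hk | hk
      · exact absurd (himin k hkM) (by omega)
      · exact absurd (hjmax k hkM) (by omega)
    · rw [List.getD_eq_default _ _ (by omega), List.getD_eq_default _ _ (by omega)]
  have hkey := key hlen hi_lt hj_lt hij hi_ne hj_ne hout
  have hfin : (deletionBall 1 x ∩ deletionBall 1 y).Finite := by
    apply Set.Finite.subset ((Set.finite_singleton (x.eraseIdx j)).insert (x.eraseIdx i))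
    intro z hz
    rcases (hkey z).mp hz with ⟨_, rfl⟩ | ⟨_, rfl⟩
    · exact Set.mem_insert _ _
    · exact Set.mem_insert_iff.mpr (Or.inr rfl)
  obtain ⟨z1, z2, hz1, hz2, hz12⟩ := (Set.one_lt_ncard_iff hfin).mp (by omega)
  have hijlt : x.eraseIdx i ≠ x.eraseIdx j → i < j := by
    intro hne2
    rcases Nat.lt_or_ge i j with h | h
    · exact h
    · exact absurd (by rw [show i = j by omega]) hne2
  rcases (hkey z1).mp hz1 with ⟨hA, rfl⟩ | ⟨hB, rfl⟩ <;>
    rcases (hkey z2).mp hz2 with ⟨hA', rfl⟩ | ⟨hB', rfl⟩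
  · exact absurd rfl hz12
  · exact build hlen hi_lt hj_lt (hijlt hz12) hi_ne hout hA hB'
  · exact build hlen hi_lt hj_lt (hijlt (Ne.symm hz12)) hi_ne hout hA' hB
  · exact absurd rfl hz12

theorem stmt4 (n : ℕ) (hn : 1 ≤ n) (x y : List Bool)
    (hx : x.length = n) (hy : y.length = n) (hxy : x ≠ y) :
    (deletionBall 1 x ∩ deletionBall 1 y).ncard = 2 ↔ TypeAConfusable x y := by
  constructor
  · intro h
    exact forward (hx.trans hy.symm) hxy h
  · intro h
    exact backward (hx.trans hy.symm) h
end

section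
/- Fix ℓ ≥ 1 and n with 2ℓ ≤ n, and set m = ⌊n/(2ℓ)⌋ and r = n − 2ℓm. Let Λ ⊆ {0,1}^{2ℓ} consist of the 2ℓ words (01)^j(10)^{ℓ−j} and (10)^j(01)^{ℓ−j} for 1 ≤ j ≤ ℓ, and let Λ̃ = {0,1}^{2ℓ} \ Λ. Divide each word of length n into m blocks of length 2ℓ followed by one block of length r. For each triple z = (u, w, i) with u ∈ Λ̃^{i−1}, w ∈ {0,1}^{2ℓ(m−i)+r} and 1 ≤ i ≤ m, let Q_z^{(0)} = { u·(01)^j(10)^{ℓ−j}·w : 1 ≤ j ≤ ℓ } and Q_z^{(1)} = { u·(10)^j(01)^{ℓ−j}·w : 1 ≤ j ≤ ℓ }. Then: (a) any two distinct words in the same set Q_z^{(0)} (or in the same Q_z^{(1)}) are Type-A-confusable; and (b) every binary word of length n either has all of its first m blocks in Λ̃, or belongs to Q_z^{(0)} or Q_z^{(1)} for some such triple z. In particular, the singletons {x} for x ∈ Λ̃^m × {0,1}^r together with the sets Q_z^{(0)}, Q_z^{(1)} form a clique cover of the graph on {0,1}^n in which two words are adjacent exactly when they are Type-A-confusable. 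-/
/-- The word `(01)^j (10)^{ℓ-j}`. -/
def pat0 (ℓ j : ℕ) : List Bool :=
  (List.replicate j [false, true]).flatten ++ (List.replicate (ℓ - j) [true, false]).flatten

/-- The word `(10)^j (01)^{ℓ-j}`. -/
def pat1 (ℓ j : ℕ) : List Bool :=
  (List.replicate j [true, false]).flatten ++ (List.replicate (ℓ - j) [false, true]).flatten

/-- `Λ`: the `2ℓ` words `(01)^j(10)^{ℓ-j}` and `(10)^j(01)^{ℓ-j}`, `1 ≤ j ≤ ℓ`. -/
def Lam (ℓ : ℕ) : Set (List Bool) :=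
  {z | ∃ j, 1 ≤ j ∧ j ≤ ℓ ∧ (z = pat0 ℓ j ∨ z = pat1 ℓ j)}

def blk (b : Bool) (d : ℕ) : List Bool := (List.replicate d [b, !b]).flatten

lemma blk_succ (b : Bool) (d : ℕ) : blk b (d+1) = b :: (!b) :: blk b d := by
  simp [blk, List.replicate_succ]

lemma blk_length (b : Bool) (d : ℕ) : (blk b d).length = 2 * d := by
  simp [blk, List.length_flatten]; omega

lemma blk_add (b : Bool) (d e : ℕ) : blk b (d+e) = blk b d ++ blk b e := by
  unfold blk; rw [List.replicate_add, List.flatten_append]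

lemma blk_map (b : Bool) (d : ℕ) : (blk b d).map (!·) = blk (!b) d := by
  induction d with
  | zero => simp [blk]
  | succ d ih => rw [blk_succ, blk_succ]; simp [ih]

lemma blk_chain_cons (b : Bool) (d : ℕ) : List.Chain' (· ≠ ·) ((!b) :: blk b d) := by
  induction d with
  | zero => simp [blk, List.Chain']
  | succ d ih =>
      rw [blk_succ, List.Chain', List.isChain_cons_cons, List.isChain_cons_cons]
      exact ⟨Bool.not_ne_self b, (Bool.not_ne_self b).symm, ih⟩

lemma blk_chain (b : Bool) (d : ℕ) : List.Chain' (· ≠ ·) (blk b d) := by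
  cases d with
  | zero => simp [blk, List.Chain']
  | succ d =>
      rw [blk_succ, List.Chain', List.isChain_cons_cons]
      exact ⟨(Bool.not_ne_self b).symm, blk_chain_cons b d⟩

lemma pat0_eq (ℓ j : ℕ) : pat0 ℓ j = blk false j ++ blk true (ℓ - j) := by
  simp [pat0, blk]

lemma pat1_eq (ℓ j : ℕ) : pat1 ℓ j = blk true j ++ blk false (ℓ - j) := by
  simp [pat1, blk]

lemma confuse_blk (b : Bool) (ℓ j j' : ℕ) (h1 : j < j') (h2 : j' ≤ ℓ) (u w : List Bool) :
    TypeAConfusable (u ++ (blk b j ++ blk (!b) (ℓ - j)) ++ w)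
      (u ++ (blk b j' ++ blk (!b) (ℓ - j')) ++ w) := by
  refine ⟨u ++ blk b j, blk (!b) (j' - j), blk (!b) (ℓ - j') ++ w, ?_, blk_chain _ _, ?_, ?_⟩
  · rw [blk_length]; omega
  · have h : ℓ - j = (j' - j) + (ℓ - j') := by omega
    rw [h, blk_add]; simp [List.append_assoc]
  · rw [blk_map, Bool.not_not]
    have h : j' = j + (j' - j) := by omega
    rw [h, blk_add]; simp [List.append_assoc]

lemma TypeAConfusable.symm {x y : List Bool} (h : TypeAConfusable x y) : TypeAConfusable y x := by
  obtain ⟨u, a, v, h2, hc, hx, hy⟩ := h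
  have hmm : (a.map (!·)).map (!·) = a := by simp [List.map_map, Function.comp_def]
  refine ⟨u, a.map (!·), v, by simpa using h2, ?_, hy, by rw [hmm]; exact hx⟩
  unfold List.Chain' at hc ⊢
  rw [List.isChain_map]
  exact hc.imp (fun _ _ h hb => h (by simpa using congrArg (!·) hb))

lemma confuse_pat0 (ℓ j j' : ℕ) (h1 : j < j') (h2 : j' ≤ ℓ) (u w : List Bool) :
    TypeAConfusable (u ++ pat0 ℓ j ++ w) (u ++ pat0 ℓ j' ++ w) := by
  rw [pat0_eq, pat0_eq]
  simpa using confuse_blk false ℓ j j' h1 h2 u w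

lemma confuse_pat1 (ℓ j j' : ℕ) (h1 : j < j') (h2 : j' ≤ ℓ) (u w : List Bool) :
    TypeAConfusable (u ++ pat1 ℓ j ++ w) (u ++ pat1 ℓ j' ++ w) := by
  rw [pat1_eq, pat1_eq]
  simpa using confuse_blk true ℓ j j' h1 h2 u w

lemma pat_length {ℓ j : ℕ} (hj : j ≤ ℓ) :
    (pat0 ℓ j).length = 2 * ℓ ∧ (pat1 ℓ j).length = 2 * ℓ := by
  rw [pat0_eq, pat1_eq]
  simp [blk_length]; omega

theorem stmt5 (ℓ n : ℕ) (hℓ : 1 ≤ ℓ) (hn : 2 * ℓ ≤ n) :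
    -- (a) any two distinct words in the same `Q_z^{(0)}` (resp. `Q_z^{(1)}`)
    -- are Type-A-confusable
    (∀ (u w : List Bool) (j j' : ℕ), 1 ≤ j → j ≤ ℓ → 1 ≤ j' → j' ≤ ℓ → j ≠ j' →
      TypeAConfusable (u ++ pat0 ℓ j ++ w) (u ++ pat0 ℓ j' ++ w) ∧
      TypeAConfusable (u ++ pat1 ℓ j ++ w) (u ++ pat1 ℓ j' ++ w)) ∧
    -- (b) every word of length `n` either has all of its first `m = ⌊n/(2ℓ)⌋` blocks
    -- outside `Λ`, or lies in some `Q_z^{(0)}` or `Q_z^{(1)}`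
    (∀ x : List Bool, x.length = n →
      (∀ i, 1 ≤ i → i ≤ n / (2 * ℓ) → ((x.drop (2 * ℓ * (i - 1))).take (2 * ℓ)) ∉ Lam ℓ) ∨
      (∃ (i j : ℕ) (u w : List Bool), 1 ≤ i ∧ i ≤ n / (2 * ℓ) ∧ 1 ≤ j ∧ j ≤ ℓ ∧
        u.length = 2 * ℓ * (i - 1) ∧
        (∀ k, 1 ≤ k → k ≤ i - 1 → ((u.drop (2 * ℓ * (k - 1))).take (2 * ℓ)) ∉ Lam ℓ) ∧
        w.length = 2 * ℓ * (n / (2 * ℓ) - i) + (n - 2 * ℓ * (n / (2 * ℓ))) ∧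
        (x = u ++ pat0 ℓ j ++ w ∨ x = u ++ pat1 ℓ j ++ w))) := by
  constructor
  · intro u w j j' _ hj _ hj' hne
    rcases Nat.lt_or_ge j j' with h | h
    · exact ⟨confuse_pat0 ℓ j j' h hj' u w, confuse_pat1 ℓ j j' h hj' u w⟩
    · have h' : j' < j := by omega
      exact ⟨(confuse_pat0 ℓ j' j h' hj u w).symm, (confuse_pat1 ℓ j' j h' hj u w).symm⟩
  · intro x hx
    set m := n / (2 * ℓ) with hm
    by_cases hall : ∀ i, 1 ≤ i → i ≤ m → ((x.drop (2 * ℓ * (i - 1))).take (2 * ℓ)) ∉ Lam ℓ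
    · exact Or.inl hall
    · right
      classical
      push_neg at hall
      obtain ⟨i₀, hi₀1, hi₀m, hi₀⟩ := hall
      have hex : ∃ i, 1 ≤ i ∧ i ≤ m ∧ ((x.drop (2 * ℓ * (i - 1))).take (2 * ℓ)) ∈ Lam ℓ :=
        ⟨i₀, hi₀1, hi₀m, hi₀⟩
      obtain ⟨i, ⟨h1i, him, hblk⟩, hmin⟩ :
          ∃ i, (1 ≤ i ∧ i ≤ m ∧ ((x.drop (2 * ℓ * (i - 1))).take (2 * ℓ)) ∈ Lam ℓ) ∧
            ∀ k < i, ¬(1 ≤ k ∧ k ≤ m ∧ ((x.drop (2 * ℓ * (k - 1))).take (2 * ℓ)) ∈ Lam ℓ) :=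
        ⟨Nat.find hex, Nat.find_spec hex, fun k hk => Nat.find_min hex hk⟩
      obtain ⟨j, hj1, hjℓ, hj⟩ := hblk
      have hmn : 2 * ℓ * m ≤ n := by
        rw [hm, mul_comm]
        exact Nat.div_mul_le_self n (2 * ℓ)
      have him' : 2 * ℓ * i ≤ 2 * ℓ * m := Nat.mul_le_mul_left _ him
      have e1 : 2 * ℓ * (i - 1) + 2 * ℓ = 2 * ℓ * i := by
        have h : i - 1 + 1 = i := by omega
        calc 2 * ℓ * (i - 1) + 2 * ℓ = 2 * ℓ * ((i - 1) + 1) := by ring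
          _ = 2 * ℓ * i := by rw [h]
      have e2 : 2 * ℓ * (m - i) + 2 * ℓ * i = 2 * ℓ * m := by
        have h : (m - i) + i = m := by omega
        calc 2 * ℓ * (m - i) + 2 * ℓ * i = 2 * ℓ * ((m - i) + i) := by ring
          _ = 2 * ℓ * m := by rw [h]
      refine ⟨i, j, x.take (2 * ℓ * (i - 1)), x.drop (2 * ℓ * (i - 1) + 2 * ℓ),
        h1i, him, hj1, hjℓ, ?_, ?_, ?_, ?_⟩
      · rw [List.length_take, hx]; omega
      · intro k hk1 hki
        have hlt : k < i := by omega
        have hnot := hmin k hlt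
        have hkm : k ≤ m := by omega
        have hle : 2 * ℓ * (k - 1) + 2 * ℓ ≤ 2 * ℓ * (i - 1) := by
          have h : (k - 1) + 1 ≤ i - 1 := by omega
          calc 2 * ℓ * (k - 1) + 2 * ℓ = 2 * ℓ * ((k - 1) + 1) := by ring
            _ ≤ 2 * ℓ * (i - 1) := Nat.mul_le_mul_left _ h
        rw [List.drop_take, List.take_take,
          min_eq_left (by omega : 2 * ℓ ≤ 2 * ℓ * (i - 1) - 2 * ℓ * (k - 1))]
        intro hmem
        exact hnot ⟨hk1, hkm, hmem⟩
      · rw [List.length_drop, hx]; omega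
      · have hpl : ((x.drop (2 * ℓ * (i - 1))).take (2 * ℓ)).length = 2 * ℓ := by
          rcases hj with h | h <;> rw [h]
          · exact (pat_length hjℓ).1
          · exact (pat_length hjℓ).2
        have hdecomp : x = x.take (2 * ℓ * (i - 1)) ++
            (x.drop (2 * ℓ * (i - 1))).take (2 * ℓ) ++ x.drop (2 * ℓ * (i - 1) + 2 * ℓ) := by
          rw [List.append_assoc]
          nth_rewrite 1 [← List.take_append_drop (2 * ℓ * (i - 1)) x]
          congr 1
          rw [← List.drop_drop]
          exact (List.take_append_drop _ _).symm
        rcases hj with h | h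
        · left; rw [← h]; exact hdecomp
        · right; rw [← h]; exact hdecomp
end

section
/- Fix ℓ ≥ 1 and n with 2ℓ ≤ n, set m = ⌊n/(2ℓ)⌋ and q = 1 − 2ℓ/2^{2ℓ}. Then every (n, 2; D_1)-reconstruction code C ⊆ {0,1}^n satisfies |C| ≤ 2^n · ( q^m + (1/ℓ)·(1 − q^m) ). -/
/-- `C` is an `(n, N; D_t)`-reconstruction code. -/
def IsReconCode (n N t : ℕ) (C : Set (List Bool)) : Prop :=
  (∀ x ∈ C, x.length = n) ∧
  ∀ x ∈ C, ∀ y ∈ C, x ≠ y → (deletionBall t x ∩ deletionBall t y).ncard < N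

namespace Recon
open List

/-! ### Alternating words and special patterns -/

def alt (b : Bool) : ℕ → List Bool
  | 0 => []
  | k+1 => b :: (!b) :: alt b k

@[simp] lemma alt_zero (b : Bool) : alt b 0 = [] := rfl
@[simp] lemma alt_succ (b : Bool) (k : ℕ) : alt b (k+1) = b :: (!b) :: alt b k := rfl

@[simp] lemma alt_length (b : Bool) (k : ℕ) : (alt b k).length = 2*k := by
  induction k with
  | zero => rfl
  | succ k ih => simp [alt, ih]; omega

lemma alt_add (b : Bool) (i j : ℕ) : alt b (i+j) = alt b i ++ alt b j := by
  induction i with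
  | zero => simp
  | succ i ih => rw [Nat.succ_add]; simp [alt, ih]

lemma alt_shift (b : Bool) (k : ℕ) : alt (!b) k ++ [!b] = (!b) :: alt b k := by
  induction k with
  | zero => simp
  | succ k ih => simp only [alt_succ, Bool.not_not, List.cons_append, ih]

lemma alt_getElem (b : Bool) {i k : ℕ} (h : i < k) : (alt b k)[2*i]? = some b := by
  induction k generalizing i with
  | zero => omega
  | succ k ih =>
    cases i with
    | zero => simp
    | succ i =>
      have h2 : 2 * (i+1) = (2*i) + 1 + 1 := by ring
      rw [h2]; simpa using ih (by omega)

/-- the special pattern: `(b !b)^i (!b b)^(r-i) !b !b`. -/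
def pat (r : ℕ) (b : Bool) (i : ℕ) : List Bool := alt b i ++ (alt (!b) (r - i) ++ [!b, !b])

lemma pat_length {r i : ℕ} (h : i ≤ r) (b : Bool) : (pat r b i).length = 2*r + 2 := by
  simp [pat]; omega

lemma pat_getLast? (r : ℕ) (b : Bool) (i : ℕ) : (pat r b i).getLast? = some (!b) := by
  simp [pat, List.getLast?_append]

lemma pat_getElem_self {r i : ℕ} (h : i ≤ r) (b : Bool) : (pat r b i)[2*i]? = some (!b) := by
  rw [pat, List.getElem?_append_right (by simp)]
  simp only [alt_length, Nat.sub_self]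
  rcases Nat.lt_or_ge i r with h' | h'
  · rw [List.getElem?_append_left (by simp; omega)]
    have h3 : r - i = (r - i - 1) + 1 := by omega
    rw [h3]; simp
  · have h4 : r = i := by omega
    subst h4
    simp

lemma pat_getElem_lt {r i j : ℕ} (hij : i < j) (hjr : j ≤ r) (b : Bool) :
    (pat r b j)[2*i]? = some b := by
  rw [pat, List.getElem?_append_left (by simp; omega)]
  exact alt_getElem b hij

lemma pat_inj {r : ℕ} {b b' : Bool} {i j : ℕ} (hi : i ≤ r) (hj : j ≤ r)
    (h : pat r b i = pat r b' j) : b = b' ∧ i = j := by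
  have hb : b = b' := by
    have h5 := pat_getLast? r b i
    rw [h, pat_getLast? r b' j] at h5
    simpa using h5.symm
  subst hb
  refine ⟨rfl, ?_⟩
  by_contra hne
  rcases Nat.lt_or_ge i j with h' | h'
  · have h1 := pat_getElem_self hi b
    rw [h, pat_getElem_lt h' hj] at h1
    simp at h1
  · have h'' : j < i := by omega
    have h1 := pat_getElem_self hj b
    rw [← h, pat_getElem_lt h'' hi] at h1
    simp at h1

/-! ### Two common subsequences -/

lemma singleton_sub (b c : Bool) : [b] <+ [b, c] :=
  (List.nil_sublist [c]).cons₂ b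

lemma cons_sub_alt (b : Bool) (d : ℕ) : (!b) :: alt b d <+ alt (!b) (d+1) := by
  rw [← alt_shift, alt_add]
  refine List.Sublist.append_left ?_ _
  simpa using singleton_sub (!b) b

lemma two_common {r i j : ℕ} (b : Bool) (hij : i < j) (hjr : j ≤ r) (u v : List Bool) :
    ∃ z₁ z₂ : List Bool, z₁ ≠ z₂ ∧
      (z₁ ∈ deletionBall 1 (u ++ pat r b i ++ v) ∩ deletionBall 1 (u ++ pat r b j ++ v)) ∧
      (z₂ ∈ deletionBall 1 (u ++ pat r b i ++ v) ∩ deletionBall 1 (u ++ pat r b j ++ v)) := by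
  obtain ⟨d, rfl⟩ : ∃ d, j = i + (d + 1) := ⟨j - i - 1, by omega⟩
  obtain ⟨s, rfl⟩ : ∃ s, r = i + ((d+1) + s) := ⟨r - (i + (d+1)), by omega⟩
  set r := i + ((d+1) + s) with hr
  set j := i + (d+1) with hj
  set mid1 : List Bool := alt b i ++ (alt b (d+1+s) ++ [!b]) with hmid1
  set mid2 : List Bool := alt b i ++ (((!b) :: alt b d) ++ (alt (!b) s ++ [!b, !b])) with hmid2
  have hri : r - i = (d+1) + s := by omega
  have hrj : r - j = s := by omega
  have hpi : pat r b i = alt b i ++ (alt (!b) (d+1) ++ (alt (!b) s ++ [!b, !b])) := by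
    rw [pat, hri, alt_add, List.append_assoc]
  have hpi' : pat r b i = alt b i ++ (((!b) :: alt b (d+1+s)) ++ [!b]) := by
    rw [pat, hri, ← alt_shift]
    simp
  have hpj : pat r b j = alt b i ++ (alt b (d+1) ++ (alt (!b) s ++ [!b, !b])) := by
    rw [pat, hrj, hj, alt_add, List.append_assoc]
  have sub1i : mid1 <+ pat r b i := by
    rw [hpi', hmid1]
    refine List.Sublist.append_left ?_ _
    exact (List.sublist_cons_self (!b) _).append_right [!b]
  have sub1j : mid1 <+ pat r b j := by
    rw [hpj, hmid1, alt_add b (d+1) s, List.append_assoc]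
    refine List.Sublist.append_left ?_ _
    refine List.Sublist.append_left ?_ _
    have h2 : alt (!b) s ++ [!b, !b] = (!b) :: (alt b s ++ [!b]) := by
      have h3 : alt (!b) s ++ [!b, !b] = (alt (!b) s ++ [!b]) ++ [!b] := by simp
      rw [h3, alt_shift]; simp
    rw [h2]
    exact List.sublist_cons_self _ _
  have sub2i : mid2 <+ pat r b i := by
    rw [hpi, hmid2]
    refine List.Sublist.append_left ?_ _
    exact (cons_sub_alt b d).append (List.Sublist.refl _)
  have sub2j : mid2 <+ pat r b j := by
    rw [hpj, hmid2]
    refine List.Sublist.append_left ?_ _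
    exact (List.sublist_cons_self b _).append_right _
  have hpatlen : ∀ k : ℕ, k ≤ r → (pat r b k).length = 2*r+2 := by
    intro k hk; simp [pat]; omega
  have len1 : mid1.length = 2*r+1 := by simp [hmid1]; omega
  have len2 : mid2.length = 2*r+1 := by simp [hmid2]; omega
  have midne : mid1 ≠ mid2 := by
    intro h
    have e1 : mid1[2*i]? = some b := by
      rw [hmid1, List.getElem?_append_right (by simp)]
      simp [show d+1+s = (d+s)+1 from by omega]
    have e2 : mid2[2*i]? = some (!b) := by
      rw [hmid2, List.getElem?_append_right (by simp)]
      simp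
    rw [h, e2] at e1
    simp at e1
  refine ⟨u ++ mid1 ++ v, u ++ mid2 ++ v, ?_, ?_, ?_⟩
  · intro h
    exact midne (List.append_cancel_left (List.append_cancel_right h))
  · constructor
    · exact ⟨(sub1i.append_left u).append_right v, by
        simp only [List.length_append, len1, hpatlen i (by omega)]; omega⟩
    · exact ⟨(sub1j.append_left u).append_right v, by
        simp only [List.length_append, len1, hpatlen j (by omega)]; omega⟩
  · constructor
    · exact ⟨(sub2i.append_left u).append_right v, by
        simp only [List.length_append, len2, hpatlen i (by omega)]; omega⟩
    · exact ⟨(sub2j.append_left u).append_right v, by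
        simp only [List.length_append, len2, hpatlen j (by omega)]; omega⟩

lemma two_le_ncard_inter {x y z₁ z₂ : List Bool}
    (h1 : z₁ ∈ deletionBall 1 x ∩ deletionBall 1 y)
    (h2 : z₂ ∈ deletionBall 1 x ∩ deletionBall 1 y) (hne : z₁ ≠ z₂) :
    2 ≤ (deletionBall 1 x ∩ deletionBall 1 y).ncard := by
  have hfin : (deletionBall 1 x ∩ deletionBall 1 y).Finite := by
    refine Set.Finite.subset (x.sublists.toFinset.finite_toSet) ?_
    rintro z ⟨⟨hs, _⟩, _⟩
    simp only [List.coe_toFinset, Set.mem_setOf_eq, List.mem_sublists]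
    exact hs
  calc (2 : ℕ) = ({z₁, z₂} : Set (List Bool)).ncard := (Set.ncard_pair hne).symm
    _ ≤ _ := Set.ncard_le_ncard (by
        rw [Set.insert_subset_iff, Set.singleton_subset_iff]; exact ⟨h1, h2⟩) hfin

/-! ### Words, blocks, counting -/

def words : ℕ → Finset (List Bool)
  | 0 => {[]}
  | n+1 => ((words n).image (List.cons true)) ∪ ((words n).image (List.cons false))

lemma mem_words {n : ℕ} {x : List Bool} : x ∈ words n ↔ x.length = n := by
  induction n generalizing x with
  | zero => simp [words, List.length_eq_zero_iff]
  | succ n ih =>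
    cases x with
    | nil => simp [words]
    | cons b y =>
      cases b <;> simp [words, ih]

lemma card_words (n : ℕ) : (words n).card = 2^n := by
  induction n with
  | zero => rfl
  | succ n ih =>
    rw [words, Finset.card_union_of_disjoint, Finset.card_image_of_injective _ (List.cons_injective),
      Finset.card_image_of_injective _ (List.cons_injective), ih]
    · ring
    · simp only [Finset.disjoint_left, Finset.mem_image]
      rintro x ⟨y, _, rfl⟩ ⟨z, _, h⟩
      simp at h

def blockAt (L i : ℕ) (x : List Bool) : List Bool := (x.drop (L*i)).take L

def replaceB (L k : ℕ) (p x : List Bool) : List Bool :=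
  x.take (L*k) ++ p ++ x.drop (L*k + L)

lemma replaceB_length {L k : ℕ} {p x : List Bool} (hp : p.length = L)
    (h : L*k + L ≤ x.length) : (replaceB L k p x).length = x.length := by
  simp [replaceB, hp]; omega

lemma blockAt_replaceB_lt {L k i : ℕ} {p x : List Bool} (hik : i < k)
    (h : L*k + L ≤ x.length) : blockAt L i (replaceB L k p x) = blockAt L i x := by
  have h1 : L*i + L ≤ L*k := by
    have h1a : L*(i+1) ≤ L*k := Nat.mul_le_mul_left L hik
    have h1b : L*(i+1) = L*i + L := by ring
    omega
  have hx : min (L*k) x.length = L*k := min_eq_left (by omega)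
  rw [blockAt, replaceB, List.append_assoc, List.drop_append,
    List.take_append]
  simp only [List.length_drop, List.length_take, hx]
  have h2 : L - (L*k - L*i) = 0 := by omega
  rw [h2, List.take_zero, List.append_nil, List.drop_take, List.take_take,
    min_eq_left (by omega), blockAt]

lemma blockAt_replaceB_self {L k : ℕ} {p x : List Bool} (hp : p.length = L)
    (h : L*k + L ≤ x.length) : blockAt L k (replaceB L k p x) = p := by
  rw [blockAt, replaceB, List.append_assoc, List.drop_append]
  have h2 : (x.take (L*k)).length = L*k := by simp; omega
  rw [h2, Nat.sub_self, List.drop_zero, List.drop_of_length_le (by omega),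
    List.nil_append, List.take_append, List.take_of_length_le (by omega),
    hp, Nat.sub_self]
  simp

lemma replaceB_self {L k : ℕ} {x : List Bool} :
    replaceB L k (blockAt L k x) x = x := by
  rw [replaceB, blockAt, List.append_assoc, ← List.drop_drop, List.take_append_drop,
    List.take_append_drop]

lemma count_avoid (L : ℕ) (P : Finset (List Bool)) (hP : ∀ p ∈ P, p.length = L) :
    ∀ k t : ℕ,
    ((words (L*k + t)).filter (fun x => ∀ i < k, blockAt L i x ∉ P)).card
      = (2^L - P.card)^k * 2^t := by
  intro k
  induction k with
  | zero =>
    intro t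
    rw [Finset.filter_true_of_mem (by intro x _; omega)]
    simp [card_words]
  | succ k ih =>
    intro t
    have hsplit : (words (L*(k+1) + t)).filter (fun x => ∀ i < k+1, blockAt L i x ∉ P)
        = ((words L).filter (· ∉ P)).biUnion
            (fun p => ((words (L*k + t)).filter
              (fun y => ∀ i < k, blockAt L i y ∉ P)).image (fun y => p ++ y)) := by
      have hmul : L*(k+1) = L*k + L := by ring
      ext x
      simp only [Finset.mem_filter, Finset.mem_biUnion, Finset.mem_image, mem_words]
      constructor
      · rintro ⟨hlen, hgood⟩
        refine ⟨x.take L, ⟨by simp; omega, ?_⟩, x.drop L, ⟨⟨by simp; omega, ?_⟩,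
          List.take_append_drop L x⟩⟩
        · have h0 := hgood 0 (by omega)
          simpa [blockAt] using h0
        · intro i hi
          have hi1 := hgood (i+1) (by omega)
          rw [blockAt] at hi1 ⊢
          rw [List.drop_drop]
          have h9 : L + L * i = L * (i+1) := by ring
          rw [h9]
          exact hi1
      · rintro ⟨p, ⟨hpl, hpP⟩, y, ⟨⟨hyl, hygood⟩, rfl⟩⟩
        have hLi : ∀ i : ℕ, L ≤ L*(i+1) := by
          intro i
          have := Nat.mul_le_mul_left L (Nat.succ_le_succ (Nat.zero_le i))
          simpa using this
        refine ⟨by simp [hpl, hyl]; ring, ?_⟩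
        intro i hi
        cases i with
        | zero =>
          rw [blockAt]
          simp only [Nat.mul_zero, List.drop_zero]
          rw [List.take_append, List.take_of_length_le (by omega), hpl,
            Nat.sub_self]
          simpa using hpP
        | succ i =>
          rw [blockAt, List.drop_append,
            List.drop_of_length_le (by rw [hpl]; exact hLi i), List.nil_append, hpl]
          have h6 : L * (i+1) - L = L * i := by
            have h6a : L*(i+1) = L*i + L := by ring
            omega
          rw [h6]
          exact hygood i (by omega)
    rw [hsplit, Finset.card_biUnion]
    · have hcst : ∀ p ∈ (words L).filter (· ∉ P),
          (((words (L*k + t)).filter (fun y => ∀ i < k, blockAt L i y ∉ P)).image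
            (fun y => p ++ y)).card = (2^L - P.card)^k * 2^t := by
        intro p _
        rw [Finset.card_image_of_injective _ (fun a b h => List.append_cancel_left h), ih]
      rw [Finset.sum_congr rfl hcst, Finset.sum_const, smul_eq_mul]
      have hcf : ((words L).filter (· ∉ P)).card = 2^L - P.card := by
        have h7 := Finset.card_filter_add_card_filter_not (s := words L)
          (p := (· ∈ P))
        have h8 : (words L).filter (· ∈ P) = P := by
          ext p
          simp only [Finset.mem_filter, mem_words]
          exact ⟨fun h => h.2, fun h => ⟨hP p h, h⟩⟩
        rw [h8, card_words] at h7
        omega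
      rw [hcf, pow_succ]
      ring
    · rintro p hp q hq hpq
      simp only [Finset.disjoint_left, Finset.mem_image]
      rintro x ⟨y, hy, rfl⟩ ⟨z, hz, h⟩
      simp only [Finset.mem_coe, Finset.mem_filter, mem_words] at hp hq hy hz
      exact hpq ((List.append_inj h.symm (by omega)).1.symm ▸ rfl)

/-! ### special pattern set, first bad block -/

def Pfin (r ℓ : ℕ) : Finset (List Bool) :=
  ((Finset.range ℓ).image (pat r true)) ∪ ((Finset.range ℓ).image (pat r false))

lemma mem_Pfin {r ℓ : ℕ} {p : List Bool} :
    p ∈ Pfin r ℓ ↔ ∃ b i, i < ℓ ∧ p = pat r b i := by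
  simp only [Pfin, Finset.mem_union, Finset.mem_image, Finset.mem_range]
  constructor
  · rintro (⟨i, hi, rfl⟩ | ⟨i, hi, rfl⟩)
    exacts [⟨true, i, hi, rfl⟩, ⟨false, i, hi, rfl⟩]
  · rintro ⟨b, i, hi, rfl⟩
    cases b
    exacts [Or.inr ⟨i, hi, rfl⟩, Or.inl ⟨i, hi, rfl⟩]

lemma Pfin_length {r ℓ : ℕ} (hr : r + 1 = ℓ) {p : List Bool} (hp : p ∈ Pfin r ℓ) :
    p.length = 2*ℓ := by
  obtain ⟨b, i, hi, rfl⟩ := mem_Pfin.1 hp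
  rw [pat_length (by omega)]
  omega

lemma Pfin_card {r ℓ : ℕ} (hr : r + 1 = ℓ) : (Pfin r ℓ).card = 2*ℓ := by
  rw [Pfin, Finset.card_union_of_disjoint, Finset.card_image_of_injOn,
    Finset.card_image_of_injOn]
  · simp [Finset.card_range]; ring
  · intro i hi j hj h
    simp only [Finset.coe_range, Set.mem_Iio] at hi hj
    exact (pat_inj (by omega) (by omega) h).2
  · intro i hi j hj h
    simp only [Finset.coe_range, Set.mem_Iio] at hi hj
    exact (pat_inj (by omega) (by omega) h).2
  · simp only [Finset.disjoint_left, Finset.mem_image, Finset.mem_range]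
    rintro p ⟨i, hi, rfl⟩ ⟨j, hj, h⟩
    have := (pat_inj (r := r) (by omega) (by omega) h.symm).1
    simp at this

/-- index of the first bad block -/
noncomputable def firstBad (L m : ℕ) (P : Finset (List Bool)) (x : List Bool) : ℕ := by
  classical
  exact if h : ∃ i, i < m ∧ blockAt L i x ∈ P then Nat.find h else 0

lemma firstBad_spec {L m : ℕ} {P : Finset (List Bool)} {x : List Bool}
    (h : ∃ i, i < m ∧ blockAt L i x ∈ P) :
    firstBad L m P x < m ∧ blockAt L (firstBad L m P x) x ∈ P ∧
      ∀ i < firstBad L m P x, blockAt L i x ∉ P := by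
  classical
  rw [firstBad]
  simp only [dif_pos h]
  obtain ⟨h1, h2⟩ := Nat.find_spec h
  refine ⟨h1, h2, ?_⟩
  intro i hi hP
  exact Nat.find_min h hi ⟨by omega, hP⟩

lemma firstBad_eq {L m : ℕ} {P : Finset (List Bool)} {x : List Bool} {k : ℕ}
    (hkm : k < m) (hk : blockAt L k x ∈ P) (hmin : ∀ i < k, blockAt L i x ∉ P) :
    firstBad L m P x = k := by
  classical
  have h : ∃ i, i < m ∧ blockAt L i x ∈ P := ⟨k, hkm, hk⟩
  rw [firstBad]
  simp only [dif_pos h]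
  rw [Nat.find_eq_iff]
  exact ⟨⟨hkm, hk⟩, fun i hi => fun hc => hmin i hi hc.2⟩

/-- last-bit type extractor -/
def bOf (l : List Bool) : Bool := !(l.getLast?.getD true)

lemma bOf_pat (r : ℕ) (b : Bool) (i : ℕ) : bOf (pat r b i) = b := by
  rw [bOf, pat_getLast?]
  simp

end Recon
theorem stmt6 (ℓ n : ℕ) (hℓ : 1 ≤ ℓ) (hn : 2 * ℓ ≤ n)
    (C : Set (List Bool)) (hC : IsReconCode n 2 1 C) :
    (C.ncard : ℝ) ≤ 2 ^ n *
      ((1 - 2 * (ℓ : ℝ) / 2 ^ (2 * ℓ)) ^ (n / (2 * ℓ)) +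
        (1 / (ℓ : ℝ)) * (1 - (1 - 2 * (ℓ : ℝ) / 2 ^ (2 * ℓ)) ^ (n / (2 * ℓ)))) := by
  classical
  obtain ⟨hlen, hcode⟩ := hC
  set q : ℝ := 1 - 2 * (ℓ : ℝ) / 2 ^ (2 * ℓ) with hqdef
  set L := 2 * ℓ with hLdef
  set m := n / L with hmdef
  set t := n % L with htdef
  set r := ℓ - 1 with hrdef
  have hr : r + 1 = ℓ := by omega
  set P := Recon.Pfin r ℓ with hPdef
  have hPlen : ∀ p ∈ P, p.length = L := fun p hp => Recon.Pfin_length hr hp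
  have hPcard : P.card = 2 * ℓ := Recon.Pfin_card hr
  have hnLm : L * m + t = n := Nat.div_add_mod n L
  have hLm_le : L * m ≤ n := by omega
  have hpatL : ∀ (b : Bool), ∀ t' < ℓ, (Recon.pat r b t').length = L := by
    intro b t' ht'
    rw [Recon.pat_length (by omega)]; omega
  set Bad : List Bool → Prop := fun x => ∃ i, i < m ∧ Recon.blockAt L i x ∈ P with hBaddef
  set S := (Recon.words n).filter Bad with hSdef
  set T := (Recon.words n).filter (fun x => ¬ Bad x) with hTdef
  set Cf := (Recon.words n).filter (· ∈ C) with hCfdef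
  -- basic membership facts
  have hmemCf : ∀ x, x ∈ Cf ↔ (x.length = n ∧ x ∈ C) := by
    intro x
    rw [hCfdef, Finset.mem_filter, Recon.mem_words]
  have hCcoe : C = ↑Cf := by
    ext x
    simp only [Finset.coe_filter, Set.mem_setOf_eq, hCfdef, Recon.mem_words]
    exact ⟨fun h => ⟨hlen x h, h⟩, fun h => h.2⟩
  have hCn : C.ncard = Cf.card := by rw [hCcoe, Set.ncard_coe_finset]
  -- preparation for the injection
  have hprep : ∀ x ∈ Cf.filter Bad, Recon.firstBad L m P x < m ∧
      Recon.blockAt L (Recon.firstBad L m P x) x ∈ P ∧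
      (∀ i < Recon.firstBad L m P x, Recon.blockAt L i x ∉ P) ∧
      L * (Recon.firstBad L m P x) + L ≤ n ∧ x.length = n ∧ x ∈ C := by
    intro x hx
    rw [Finset.mem_filter, hmemCf] at hx
    obtain ⟨⟨hxw, hxC⟩, hxB⟩ := hx
    obtain ⟨h1, h2, h3⟩ := Recon.firstBad_spec hxB
    refine ⟨h1, h2, h3, ?_, hxw, hxC⟩
    have h2a : L * (Recon.firstBad L m P x + 1) ≤ L * m := Nat.mul_le_mul_left L h1
    have h2b : L * (Recon.firstBad L m P x + 1) = L * Recon.firstBad L m P x + L := by ring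
    omega
  -- the variant map
  set f : List Bool × ℕ → List Bool := fun xt =>
    Recon.replaceB L (Recon.firstBad L m P xt.1)
      (Recon.pat r (Recon.bOf (Recon.blockAt L (Recon.firstBad L m P xt.1) xt.1)) xt.2) xt.1
    with hfdef
  have hvar : ∀ x ∈ Cf.filter Bad, ∀ t' < ℓ,
      (f (x, t')).length = n ∧
      Recon.blockAt L (Recon.firstBad L m P x) (f (x, t'))
        = Recon.pat r (Recon.bOf (Recon.blockAt L (Recon.firstBad L m P x) x)) t' ∧
      Recon.firstBad L m P (f (x, t')) = Recon.firstBad L m P x ∧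
      Bad (f (x, t')) := by
    intro x hx t' ht'
    obtain ⟨h1, h2, h3, h4, hxw, hxC⟩ := hprep x hx
    set k := Recon.firstBad L m P x with hkdef
    set b := Recon.bOf (Recon.blockAt L k x) with hbdef
    have h4' : L * k + L ≤ x.length := by omega
    have hplen : (Recon.pat r b t').length = L := hpatL b t' ht'
    have hflen : (f (x, t')).length = n := by
      rw [hfdef]
      dsimp only
      rw [Recon.replaceB_length hplen h4', hxw]
    have hfblock : Recon.blockAt L k (f (x, t'))
        = Recon.pat r b t' := by
      rw [hfdef]
      dsimp only
      exact Recon.blockAt_replaceB_self hplen h4'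
    have hinP : Recon.pat r b t' ∈ P := by
      rw [hPdef, Recon.mem_Pfin]
      exact ⟨b, t', ht', rfl⟩
    have hfb : Bad (f (x, t')) := ⟨k, h1, by rw [hfblock]; exact hinP⟩
    refine ⟨hflen, hfblock, ?_, hfb⟩
    apply Recon.firstBad_eq h1 (by rw [hfblock]; exact hinP)
    intro i hi
    have : Recon.blockAt L i (f (x, t')) = Recon.blockAt L i x := by
      rw [hfdef]
      dsimp only
      exact Recon.blockAt_replaceB_lt hi h4'
    rw [this]
    exact h3 i hi
  -- maps to S
  have hmaps : ∀ xt ∈ (Cf.filter Bad) ×ˢ Finset.range ℓ, f xt ∈ S := by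
    rintro ⟨x, t'⟩ hxt
    rw [Finset.mem_product, Finset.mem_range] at hxt
    obtain ⟨hx, ht'⟩ := hxt
    obtain ⟨hflen, _, _, hfb⟩ := hvar x hx t' ht'
    rw [hSdef, Finset.mem_filter, Recon.mem_words]
    exact ⟨hflen, hfb⟩
  -- injectivity
  have hinj : Set.InjOn f ↑((Cf.filter Bad) ×ˢ Finset.range ℓ) := by
    rintro ⟨x, t'⟩ hxt ⟨x', t''⟩ hxt' heq
    rw [Finset.coe_product, Set.mem_prod] at hxt hxt'
    obtain ⟨hx, ht'⟩ := hxt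
    obtain ⟨hx', ht''⟩ := hxt'
    rw [Finset.mem_coe] at hx hx'
    rw [Finset.mem_coe, Finset.mem_range] at ht' ht''
    obtain ⟨h1, h2, h3, h4, hxw, hxC⟩ := hprep x hx
    obtain ⟨h1', h2', h3', h4', hxw', hxC'⟩ := hprep x' hx'
    obtain ⟨hflen, hfblock, hffb, _⟩ := hvar x hx t' ht'
    obtain ⟨hflen', hfblock', hffb', _⟩ := hvar x' hx' t'' ht''
    -- the first bad indices agree
    have hkk : Recon.firstBad L m P x = Recon.firstBad L m P x' := by
      rw [← hffb, ← hffb', heq]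
    set k := Recon.firstBad L m P x with hkdef
    rw [← hkk] at h1' h2' h3' h4' hfblock' hffb'
    set b := Recon.bOf (Recon.blockAt L k x) with hbdef
    set b' := Recon.bOf (Recon.blockAt L k x') with hbdef'
    -- decompose the equality
    have heq' : x.take (L*k) ++ Recon.pat r b t' ++ x.drop (L*k + L)
        = x'.take (L*k) ++ Recon.pat r b' t'' ++ x'.drop (L*k + L) := by
      have := heq
      rw [hfdef] at this
      dsimp only at this
      rw [← hkk] at this
      exact this
    have hlen1 : (x.take (L*k) ++ Recon.pat r b t').length
        = (x'.take (L*k) ++ Recon.pat r b' t'').length := by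
      simp only [List.length_append, List.length_take, hpatL b t' ht', hpatL b' t'' ht'']
      omega
    obtain ⟨h12, hE3⟩ := List.append_inj heq' (by simpa using hlen1)
    obtain ⟨hE1, hE2⟩ := List.append_inj h12 (by simp; omega)
    -- from the middle equality
    obtain ⟨hbb, htt⟩ := Recon.pat_inj (by omega) (by omega) hE2
    -- identify the patterns of x and x'
    obtain ⟨bx, ix, hix, hbx⟩ := Recon.mem_Pfin.1 (hPdef ▸ h2)
    obtain ⟨bx', ix', hix', hbx'⟩ := Recon.mem_Pfin.1 (hPdef ▸ h2')
    have hbxb : b = bx := by rw [hbdef, hbx, Recon.bOf_pat]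
    have hbxb' : b' = bx' := by rw [hbdef', hbx', Recon.bOf_pat]
    have hbeq : bx = bx' := by rw [← hbxb, ← hbxb', hbb]
    -- reconstructions
    have hxdec : x = x.take (L*k) ++ Recon.pat r bx ix ++ x.drop (L*k + L) := by
      conv_lhs => rw [← Recon.replaceB_self (L := L) (k := k) (x := x)]
      rw [Recon.replaceB, hbx]
    have hxdec' : x' = x'.take (L*k) ++ Recon.pat r bx ix' ++ x'.drop (L*k + L) := by
      conv_lhs => rw [← Recon.replaceB_self (L := L) (k := k) (x := x')]
      rw [Recon.replaceB, hbx', hbeq]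
    have hxdec'' : x' = x.take (L*k) ++ Recon.pat r bx ix' ++ x.drop (L*k + L) := by
      rw [hxdec', hE1, hE3]
    by_cases hii : ix = ix'
    · -- then x = x'
      have : x = x' := by rw [hxdec, hxdec'', hii]
      rw [this, htt]
    · exfalso
      have hne : x ≠ x' := by
        intro hcontra
        apply hii
        have : Recon.pat r bx ix = Recon.pat r bx ix' := by
          rw [← hbx, hcontra, hbx', ← hbeq]
        exact (Recon.pat_inj (by omega) (by omega) this).2
      rcases Nat.lt_or_ge ix ix' with hlt | hge
      · obtain ⟨z₁, z₂, hz12, hz1, hz2⟩ :=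
          Recon.two_common (r := r) bx hlt (by omega) (x.take (L*k)) (x.drop (L*k + L))
        rw [← hxdec, ← hxdec''] at hz1 hz2
        have h2le := Recon.two_le_ncard_inter hz1 hz2 hz12
        have := hcode x hxC x' hxC' hne
        omega
      · have hlt' : ix' < ix := by omega
        obtain ⟨z₁, z₂, hz12, hz1, hz2⟩ :=
          Recon.two_common (r := r) bx hlt' (by omega) (x.take (L*k)) (x.drop (L*k + L))
        rw [← hxdec, ← hxdec''] at hz1 hz2
        rw [Set.inter_comm] at hz1 hz2
        have h2le := Recon.two_le_ncard_inter hz1 hz2 hz12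
        have := hcode x hxC x' hxC' hne
        omega
  -- the card inequality
  have hinj_card : (Cf.filter Bad).card * ℓ ≤ S.card := by
    have hcard := Finset.card_le_card_of_injOn f hmaps hinj
    rwa [Finset.card_product, Finset.card_range] at hcard
  -- counting
  have hScard : S.card + T.card = 2^n := by
    have h := Finset.card_filter_add_card_filter_not (s := Recon.words n) (p := Bad)
    rw [Recon.card_words] at h
    exact h
  have hBB : (Cf.filter (fun x => ¬ Bad x)).card ≤ T.card := by
    apply Finset.card_le_card
    intro x hx
    rw [Finset.mem_filter, hmemCf] at hx
    rw [hTdef, Finset.mem_filter, Recon.mem_words]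
    exact ⟨hx.1.1, hx.2⟩
  have hCfcard : Cf.card = (Cf.filter Bad).card + (Cf.filter (fun x => ¬ Bad x)).card :=
    (Finset.card_filter_add_card_filter_not (s := Cf) (p := Bad)).symm
  have hTcard : T.card = (2^L - 2*ℓ)^m * 2^t := by
    have hca := Recon.count_avoid L P hPlen m t
    rw [hnLm, hPcard] at hca
    rw [← hca, hTdef]
    congr 1
    ext x
    simp only [Finset.mem_filter]
    constructor
    · rintro ⟨hw, hnb⟩
      exact ⟨hw, fun i him hip => hnb ⟨i, him, hip⟩⟩
    · rintro ⟨hw, hall⟩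
      refine ⟨hw, ?_⟩
      rintro ⟨i, him, hip⟩
      exact hall i him hip
  -- real arithmetic
  have h2l_le : 2*ℓ ≤ 2^L := by
    have := Nat.lt_two_pow_self (n := L)
    omega
  have hl0 : (0:ℝ) < (ℓ:ℝ) := by exact_mod_cast hℓ
  have h2L0 : (0:ℝ) < (2:ℝ)^L := by positivity
  have hQq : ((2^L - 2*ℓ : ℕ) : ℝ) = 2^L * q := by
    rw [Nat.cast_sub h2l_le, hqdef]
    push_cast
    field_simp
  have hTreal : (T.card : ℝ) = 2^n * q^m := by
    have h2n : (2:ℝ)^n = ((2:ℝ)^L)^m * (2:ℝ)^t := by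
      rw [← pow_mul, ← pow_add, hnLm]
    have hstep : (T.card : ℝ) = ((2^L - 2*ℓ : ℕ) : ℝ)^m * (2:ℝ)^t := by
      rw [hTcard]; push_cast; ring
    rw [hstep, hQq, mul_pow, h2n]
    ring
  have hSreal : (S.card : ℝ) = 2^n - 2^n * q^m := by
    have : (S.card : ℝ) + (T.card : ℝ) = 2^n := by exact_mod_cast hScard
    rw [hTreal] at this
    linarith
  have hAreal : ((Cf.filter Bad).card : ℝ) ≤ (1/(ℓ:ℝ)) * (2^n - 2^n * q^m) := by
    have h' : ((Cf.filter Bad).card : ℝ) * ℓ ≤ (S.card : ℝ) := by exact_mod_cast hinj_card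
    rw [hSreal] at h'
    rw [one_div]
    rw [inv_mul_eq_div, le_div_iff₀ hl0]
    linarith
  have hBreal : ((Cf.filter (fun x => ¬ Bad x)).card : ℝ) ≤ 2^n * q^m := by
    have h' : ((Cf.filter (fun x => ¬ Bad x)).card : ℝ) ≤ (T.card : ℝ) := by exact_mod_cast hBB
    rw [hTreal] at h'
    exact h'
  have hCreal : (Cf.card : ℝ) = ((Cf.filter Bad).card : ℝ)
      + ((Cf.filter (fun x => ¬ Bad x)).card : ℝ) := by exact_mod_cast hCfcard
  rw [hCn]
  rw [hCreal]
  have : (2:ℝ)^n * (q^m + (1/(ℓ:ℝ)) * (1 - q^m))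
      = 2^n * q^m + (1/(ℓ:ℝ)) * (2^n - 2^n * q^m) := by ring
  rw [this]
  linarith
end

section
/- Let x be a binary word of length n and let 1 ≤ t < n/2. Then |D_t(x)| = Σ_{i=0}^{t} C(n−t, i) (the maximum possible size of a t-deletion ball) if and only if x is an alternating word, i.e. x = 0101… or x = 1010…. -/
/-- Finset of all subsequences of `x` with length `m`. -/
def Sfin (m : ℕ) (x : List Bool) : Finset (List Bool) :=
  (x.sublists.filter (fun z => z.length = m)).toFinset

/-- Number of distinct subsequences of `x` of length `m`. -/
def Ncnt (m : ℕ) (x : List Bool) : ℕ := (Sfin m x).card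

/-- Number of distinct subsequences of `x` of length `k` starting with `b`. -/
def gcnt (k : ℕ) (x : List Bool) (b : Bool) : ℕ :=
  ((Sfin k x).filter (fun z => z.head? = some b)).card

/-- `Q k L = ∑_{j=0}^{L-k} C(k,j)` (zero when `k > L`). -/
def Qb (k L : ℕ) : ℕ := ∑ j ∈ Finset.range (L + 1 - k), k.choose j

lemma mem_Sfin {m : ℕ} {x z : List Bool} :
    z ∈ Sfin m x ↔ z.Sublist x ∧ z.length = m := by
  simp [Sfin, List.mem_sublists]

lemma Sfin_zero (x : List Bool) : Sfin 0 x = {[]} := by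
  ext z
  simp only [mem_Sfin, Finset.mem_singleton, List.length_eq_zero_iff]
  constructor
  · rintro ⟨_, rfl⟩; rfl
  · rintro rfl; exact ⟨List.nil_sublist x, rfl⟩

lemma Ncnt_zero (x : List Bool) : Ncnt 0 x = 1 := by
  simp [Ncnt, Sfin_zero]

lemma Ncnt_nil (m : ℕ) : Ncnt m [] = if m = 0 then 1 else 0 := by
  rcases m with _ | m
  · simp [Ncnt_zero]
  · simp only [Ncnt, Nat.succ_ne_zero, if_false, Finset.card_eq_zero]
    ext z
    simp only [mem_Sfin, Finset.notMem_empty, iff_false, not_and]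
    intro hz
    have := List.sublist_nil.mp hz
    subst this; simp

lemma gcnt_nil (k : ℕ) (b : Bool) : gcnt k [] b = 0 := by
  rw [gcnt, Finset.card_eq_zero]
  ext z
  simp only [Finset.mem_filter, mem_Sfin, Finset.notMem_empty, iff_false, not_and, and_imp]
  intro hz _
  have := List.sublist_nil.mp hz
  subst this; simp

lemma Sfin_cons_filter_head (m : ℕ) (a : Bool) (x : List Bool) :
    (Sfin (m+1) (a :: x)).filter (fun z => z.head? = some a) =
      (Sfin m x).image (a :: ·) := by
  ext z
  simp only [Finset.mem_filter, mem_Sfin, Finset.mem_image]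
  constructor
  · rintro ⟨⟨hsub, hlen⟩, hhead⟩
    rcases z with _ | ⟨h, zt⟩
    · simp at hhead
    · simp only [List.head?_cons, Option.some_inj] at hhead
      subst hhead
      exact ⟨zt, ⟨List.cons_sublist_cons.mp hsub, by simpa using hlen⟩, rfl⟩
  · rintro ⟨w, ⟨hsub, hlen⟩, rfl⟩
    exact ⟨⟨List.cons_sublist_cons.mpr hsub, by simpa using hlen⟩, rfl⟩

lemma gcnt_cons_same (m : ℕ) (a : Bool) (x : List Bool) :
    gcnt (m+1) (a :: x) a = Ncnt m x := by
  rw [gcnt, Sfin_cons_filter_head, Finset.card_image_of_injective _ List.cons_injective, Ncnt]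

lemma gcnt_cons_ne (k : ℕ) (a b : Bool) (x : List Bool) (hba : b ≠ a) :
    gcnt k (a :: x) b = gcnt k x b := by
  unfold gcnt
  congr 1
  ext z
  simp only [Finset.mem_filter, mem_Sfin]
  constructor
  · rintro ⟨⟨hsub, hlen⟩, hhead⟩
    rcases List.sublist_cons_iff.mp hsub with h | ⟨r, rfl, hr⟩
    · exact ⟨⟨h, hlen⟩, hhead⟩
    · simp only [List.head?_cons, Option.some_inj] at hhead
      exact absurd hhead.symm hba
  · rintro ⟨⟨hsub, hlen⟩, hhead⟩
    exact ⟨⟨hsub.trans (List.sublist_cons_self a x), hlen⟩, hhead⟩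

lemma Sfin_cons (m : ℕ) (a : Bool) (x : List Bool) :
    Sfin (m+1) (a :: x) =
      (Sfin m x).image (a :: ·) ∪
        (Sfin (m+1) x).filter (fun z => z.head? = some (!a)) := by
  ext z
  simp only [Finset.mem_union, Finset.mem_image, Finset.mem_filter, mem_Sfin]
  constructor
  · rintro ⟨hsub, hlen⟩
    rcases z with _ | ⟨h, zt⟩
    · simp at hlen
    · by_cases hha : h = a
      · subst hha
        exact Or.inl ⟨zt, ⟨List.cons_sublist_cons.mp hsub, by simpa using hlen⟩, rfl⟩
      · right
        rcases List.sublist_cons_iff.mp hsub with h' | ⟨r, heq, hr⟩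
        · refine ⟨⟨h', hlen⟩, ?_⟩
          have : h = !a := by revert hha; cases h <;> cases a <;> simp
          simp [this]
        · obtain ⟨rfl, rfl⟩ : h = a ∧ zt = r := by simpa using heq
          exact absurd rfl hha
  · rintro (⟨w, ⟨hsub, hlen⟩, rfl⟩ | ⟨⟨hsub, hlen⟩, _⟩)
    · exact ⟨List.cons_sublist_cons.mpr hsub, by simpa using hlen⟩
    · exact ⟨hsub.trans (List.sublist_cons_self a x), hlen⟩

lemma Ncnt_cons (m : ℕ) (a : Bool) (x : List Bool) :
    Ncnt (m+1) (a :: x) = Ncnt m x + gcnt (m+1) x (!a) := by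
  have hdisj : Disjoint ((Sfin m x).image (a :: ·))
      ((Sfin (m+1) x).filter (fun z => z.head? = some (!a))) := by
    rw [Finset.disjoint_left]
    rintro z hz hz'
    simp only [Finset.mem_image] at hz
    simp only [Finset.mem_filter] at hz'
    rcases hz with ⟨w, _, rfl⟩
    have := hz'.2
    simp at this
  rw [Ncnt, Sfin_cons, Finset.card_union_of_disjoint hdisj,
    Finset.card_image_of_injective _ List.cons_injective]
  rfl

lemma Ncnt_eq_g_add_g (k : ℕ) (x : List Bool) :
    Ncnt (k+1) x = gcnt (k+1) x true + gcnt (k+1) x false := by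
  classical
  have h := Finset.card_filter_add_card_filter_not
    (s := Sfin (k+1) x) (p := fun z => z.head? = some true)
  have heq : (Sfin (k+1) x).filter (fun z => ¬ z.head? = some true) =
      (Sfin (k+1) x).filter (fun z => z.head? = some false) := by
    apply Finset.filter_congr
    intro z hz
    rcases z with _ | ⟨h, zt⟩
    · have := (mem_Sfin.mp hz).2
      simp at this
    · cases h <;> simp
  rw [Ncnt, ← h, heq, gcnt, gcnt]

lemma Qb_zero_left (L : ℕ) : Qb 0 L = 1 := by
  rw [Qb]
  rw [Finset.sum_eq_single 0]
  · simp
  · intro b _ hb; simp [Nat.choose_eq_zero_of_lt (Nat.pos_of_ne_zero hb)]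
  · intro h; simp at h

lemma sum_choose_succ (k M : ℕ) :
    ∑ j ∈ Finset.range M, (k+1).choose j =
      ∑ j ∈ Finset.range M, k.choose j + ∑ j ∈ Finset.range (M-1), k.choose j := by
  induction M with
  | zero => simp
  | succ M ih =>
    rcases M with _ | M
    · simp
    · have hA : ∑ j ∈ Finset.range (M+2), (k+1).choose j
          = ∑ j ∈ Finset.range (M+1), (k+1).choose j + (k+1).choose (M+1) :=
        Finset.sum_range_succ _ _
      have hB : ∑ j ∈ Finset.range (M+2), k.choose j
          = ∑ j ∈ Finset.range (M+1), k.choose j + k.choose (M+1) :=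
        Finset.sum_range_succ _ _
      have hC : ∑ j ∈ Finset.range (M+1), k.choose j
          = ∑ j ∈ Finset.range M, k.choose j + k.choose M :=
        Finset.sum_range_succ _ _
      have h1 : (k+1).choose (M+1) = k.choose M + k.choose (M+1) := by
        simpa using Nat.choose_succ_succ k M
      simp only [Nat.succ_sub_one, show M + 1 + 1 = M + 2 from rfl] at ih ⊢
      omega

lemma Qb_pascal (k L : ℕ) (hL : 2 ≤ L) : Qb (k+1) L = Qb k (L-1) + Qb k (L-2) := by
  rw [Qb, Qb, Qb]
  have h1 : L + 1 - (k+1) = L - k := by omega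
  have h2 : (L-1) + 1 - k = L - k := by omega
  have h3 : (L-2) + 1 - k = (L - k) - 1 := by omega
  rw [h1, h2, h3, sum_choose_succ]

lemma Qb_mono (k : ℕ) {L L' : ℕ} (h : L ≤ L') : Qb k L ≤ Qb k L' := by
  apply Finset.sum_le_sum_of_subset
  apply Finset.range_subset_range.mpr
  omega

lemma Qb_lt (k L : ℕ) (h1 : k ≤ L + 1) (h2 : L + 1 ≤ 2 * k) :
    Qb k L < Qb k (L+1) := by
  rw [Qb, Qb]
  have h3 : L + 1 + 1 - k = (L + 1 - k) + 1 := by omega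
  rw [h3, Finset.sum_range_succ]
  have : 0 < k.choose (L + 1 - k) := Nat.choose_pos (by omega)
  omega

lemma Qb_eq_zero (k L : ℕ) (h : L + 1 ≤ k) : Qb k L = 0 := by
  rw [Qb, show L + 1 - k = 0 by omega]
  simp

lemma ub (y : List Bool) :
    (∀ j, Ncnt j y ≤ Qb j y.length) ∧
    (∀ k b, gcnt (k+1) y b ≤ Qb k (y.length - 1)) := by
  induction y with
  | nil =>
    constructor
    · intro j
      rcases j with _ | j
      · rw [Ncnt_zero, Qb_zero_left]
      · rw [Ncnt_nil]; simp
    · intro k b; rw [gcnt_nil]; exact Nat.zero_le _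
  | cons c y' ih =>
    obtain ⟨ih1, ih2⟩ := ih
    constructor
    · intro j
      rcases j with _ | j
      · rw [Ncnt_zero, Qb_zero_left]
      · rw [Ncnt_cons]
        rcases y' with _ | ⟨d, y''⟩
        · rw [Ncnt_nil, gcnt_nil]
          rcases j with _ | j
          · simp [Qb]
          · simp
        · have h1 := ih1 j
          have h2 := ih2 j (!c)
          have hp := Qb_pascal j (y''.length + 2) (by omega)
          simp only [List.length_cons, Nat.add_sub_cancel,
            show y''.length + 1 + 1 = y''.length + 2 from rfl,
            show y''.length + 2 - 1 = y''.length + 1 from rfl,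
            show y''.length + 2 - 2 = y''.length from rfl] at h1 h2 hp ⊢
          omega
    · intro k b
      by_cases hbc : b = c
      · subst hbc
        rw [gcnt_cons_same]
        simpa using ih1 k
      · rw [gcnt_cons_ne _ _ _ _ hbc]
        refine le_trans (ih2 k b) (Qb_mono k ?_)
        simp only [List.length_cons, Nat.add_sub_cancel]
        omega

lemma alt_exact (y : List Bool) (hy : y.Chain' (· ≠ ·)) :
    (∀ j, Ncnt j y = Qb j y.length) ∧
    (∀ k c, y.head? = some c →
      gcnt (k+1) y c = Qb k (y.length - 1) ∧
      (1 ≤ k ∨ 2 ≤ y.length → gcnt (k+1) y (!c) = Qb k (y.length - 2))) := by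
  induction y with
  | nil =>
    constructor
    · intro j
      rcases j with _ | j
      · rw [Ncnt_zero, Qb_zero_left]
      · simp only [List.length_nil]
        rw [Ncnt_nil, Qb_eq_zero _ _ (by omega)]; simp
    · intro k c hc; simp at hc
  | cons c0 y' ih =>
    rcases y' with _ | ⟨d, y''⟩
    · constructor
      · intro j
        rcases j with _ | j
        · rw [Ncnt_zero, Qb_zero_left]
        · rw [Ncnt_cons, Ncnt_nil, gcnt_nil]
          rcases j with _ | j
          · simp [Qb]
          · simp only [List.length_cons, List.length_nil]
            rw [Qb_eq_zero _ _ (by omega)]; simp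
      · intro k c hc
        simp only [List.head?_cons, Option.some_inj] at hc
        subst hc
        constructor
        · rw [gcnt_cons_same, Ncnt_nil]
          simp only [List.length_cons, List.length_nil, Nat.add_sub_cancel]
          rcases k with _ | k
          · simp [Qb_zero_left]
          · rw [Qb_eq_zero _ _ (by omega)]; simp
        · rintro (hk | hL)
          · rw [gcnt_cons_ne _ _ _ _ (by simp), gcnt_nil,
              Qb_eq_zero _ _ (by simpa using hk)]
          · simp at hL
    · obtain ⟨hcd, hy'⟩ := List.isChain_cons_cons.mp hy
      have hd : d = !c0 := by revert hcd; cases c0 <;> cases d <;> simp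
      subst hd
      obtain ⟨ih1, ih2⟩ := ih hy'
      constructor
      · intro j
        rcases j with _ | j
        · rw [Ncnt_zero, Qb_zero_left]
        · rw [Ncnt_cons]
          have h1 := ih1 j
          have h2 := (ih2 j (!c0) rfl).1
          have hp := Qb_pascal j (y''.length + 2) (by omega)
          simp only [List.length_cons, Nat.add_sub_cancel,
            show y''.length + 1 + 1 = y''.length + 2 from rfl,
            show y''.length + 2 - 1 = y''.length + 1 from rfl,
            show y''.length + 2 - 2 = y''.length from rfl] at h1 h2 hp ⊢
          omega
      · intro k c hc
        simp only [List.head?_cons, Option.some_inj] at hc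
        subst hc
        constructor
        · rw [gcnt_cons_same]
          simpa using ih1 k
        · intro _
          rw [gcnt_cons_ne _ _ _ _ (by simp)]
          have h2 := (ih2 k (!c0) rfl).1
          simpa using h2

lemma not_chain'_length {y : List Bool} (h : ¬ y.Chain' (· ≠ ·)) : 2 ≤ y.length := by
  rcases y with _ | ⟨a, _ | ⟨b, t⟩⟩
  · exact absurd List.isChain_nil h
  · exact absurd (List.isChain_singleton a) h
  · simp

lemma strict (L : ℕ) : ∀ x : List Bool, x.length = L → ¬ x.Chain' (· ≠ ·) →
    ∀ m, m + 1 ≤ x.length → x.length + 1 ≤ 2 * m → Ncnt m x < Qb m x.length := by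
  induction L using Nat.strong_induction_on with
  | _ L IH =>
  intro x hxL hch m hm1 hm2
  rcases x with _ | ⟨a, _ | ⟨d, x''⟩⟩
  · exact absurd List.isChain_nil hch
  · exact absurd (List.isChain_singleton a) hch
  · simp only [List.length_cons] at hxL hm1 hm2 ⊢
    obtain ⟨m2, rfl⟩ : ∃ m2, m = m2 + 2 := ⟨m - 2, by omega⟩
    have hrec : Ncnt (m2+2) (a :: d :: x'') =
        Ncnt (m2+1) (d :: x'') + gcnt (m2+2) (d :: x'') (!a) :=
      Ncnt_cons (m2+1) a (d :: x'')
    rw [hrec]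
    have hub1 : Ncnt (m2+1) (d :: x'') ≤ Qb (m2+1) (x''.length + 1) := by
      have := (ub (d :: x'')).1 (m2 + 1)
      simpa using this
    have hp1 : Qb (m2+2) (x''.length+2) = Qb (m2+1) (x''.length+1) + Qb (m2+1) x''.length := by
      have := Qb_pascal (m2+1) (x''.length+2) (by omega)
      simpa using this
    show _ < Qb (m2+2) (x''.length + 2)
    by_cases hda : d = a
    · -- first two symbols equal
      subst hda
      have hgeq : gcnt (m2+2) (d :: x'') (!d) = gcnt (m2+2) x'' (!d) :=
        gcnt_cons_ne _ _ _ _ (by simp)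
      have hg : gcnt (m2+2) x'' (!d) ≤ Qb (m2+1) (x''.length - 1) := (ub x'').2 (m2+1) (!d)
      have hlt : Qb (m2+1) (x''.length - 1) < Qb (m2+1) x''.length := by
        have := Qb_lt (m2+1) (x''.length - 1) (by omega) (by omega)
        rwa [show x''.length - 1 + 1 = x''.length by omega] at this
      omega
    · -- second symbol differs from first
      have hch' : ¬ (d :: x'').Chain' (· ≠ ·) := by
        intro h
        exact hch (List.isChain_cons_cons.mpr ⟨fun he => hda he.symm, h⟩)
      by_cases hB : x''.length + 4 ≤ 2 * (m2 + 2)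
      · -- non-boundary case: induction on the tail
        have hg : gcnt (m2+2) (d :: x'') (!a) ≤ Qb (m2+1) x''.length := by
          have := (ub (d :: x'')).2 (m2+1) (!a)
          simpa using this
        have hIH : Ncnt (m2+1) (d :: x'') < Qb (m2+1) (x''.length + 1) := by
          have := IH (x''.length + 1) (by omega) (d :: x'') (by simp) hch' (m2+1)
            (by simp; omega) (by simp; omega)
          simpa using this
        omega
      · -- boundary case  L = 2m - 1
        have hLb : x''.length + 3 = 2 * (m2 + 2) := by omega
        have hd : d = !a := by revert hda; cases a <;> cases d <;> simp
        subst hd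
        have hrec2 : Ncnt (m2+1) ((!a) :: x'') = Ncnt m2 x'' + gcnt (m2+1) x'' a := by
          have := Ncnt_cons m2 (!a) x''
          simpa using this
        have hsame : gcnt (m2+2) ((!a) :: x'') (!a) = Ncnt (m2+1) x'' :=
          gcnt_cons_same (m2+1) (!a) x''
        rw [hrec2, hsame]
        have hub2 : Ncnt (m2+1) x'' ≤ Qb (m2+1) x''.length := (ub x'').1 (m2+1)
        have hub3 : Ncnt m2 x'' ≤ Qb m2 x''.length := (ub x'').1 m2
        have hp2 : Qb (m2+1) (x''.length+1) = Qb m2 x''.length + Qb m2 (x''.length - 1) := by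
          have := Qb_pascal m2 (x''.length+1) (by omega)
          rwa [show x''.length + 1 - 1 = x''.length by omega,
            show x''.length + 1 - 2 = x''.length - 1 by omega] at this
        rcases x'' with _ | ⟨e, x3⟩
        · simp only [List.length_nil] at hLb; omega
        · simp only [List.length_cons, Nat.add_sub_cancel] at hLb hp1 hp2 hub1 hub2 hub3 ⊢
          have hx3 : x3.length = 2 * m2 := by omega
          by_cases hea : e = a
          · -- defect one step deeper: use IH on the tail of the tail
            have hne : (!a) ≠ e := by simp [hea]
            have hch'' : ¬ (e :: x3).Chain' (· ≠ ·) := by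
              intro h
              exact hch' (List.isChain_cons_cons.mpr ⟨hne, h⟩)
            have hlen3 : 2 ≤ x3.length + 1 := by
              have := not_chain'_length hch''
              simpa using this
            have hIH : Ncnt (m2+1) (e::x3) < Qb (m2+1) (x3.length+1) := by
              have := IH (x3.length+1) (by omega) (e::x3) (by simp) hch'' (m2+1)
                (by simp; omega) (by simp; omega)
              simpa using this
            have hgub : gcnt (m2+1) (e::x3) a ≤ Qb m2 x3.length := by
              rw [hea, gcnt_cons_same]
              exact (ub x3).1 m2
            omega
          · -- e = !a : mismatch gives slack
            have hea' : e = !a := by revert hea; cases a <;> cases e <;> simp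
            subst hea'
            have hgeq : gcnt (m2+1) ((!a)::x3) a = gcnt (m2+1) x3 a :=
              gcnt_cons_ne _ _ _ _ (by simp)
            have hglt : gcnt (m2+1) x3 a < Qb m2 x3.length := by
              rcases Nat.eq_zero_or_pos m2 with hm0 | hm0
              · subst hm0
                have : x3 = [] := by
                  rw [← List.length_eq_zero_iff]; omega
                subst this
                rw [gcnt_nil, Qb_zero_left]
                omega
              · have h1 : gcnt (m2+1) x3 a ≤ Qb m2 (x3.length - 1) := (ub x3).2 m2 a
                have h2 : Qb m2 (x3.length - 1) < Qb m2 x3.length := by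
                  have := Qb_lt m2 (x3.length - 1) (by omega) (by omega)
                  rwa [show x3.length - 1 + 1 = x3.length by omega] at this
                omega
            omega

/-- For `1 ≤ t < n/2`, the `t`-deletion ball of a word `x` of length `n` has the
maximum possible size `∑_{i=0}^{t} C(n-t, i)` if and only if `x` is alternating
(`0101…` or `1010…`, i.e. adjacent symbols are distinct). -/
theorem stmt12 (n t : ℕ) (ht1 : 1 ≤ t) (ht2 : 2 * t < n)
    (x : List Bool) (hx : x.length = n) :
    (deletionBall t x).ncard = ∑ i ∈ Finset.range (t + 1), (n - t).choose i ↔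
      List.Chain' (· ≠ ·) x := by
  have hset : deletionBall t x = ↑(Sfin (n - t) x) := by
    ext z
    simp only [deletionBall, Set.mem_setOf_eq, Finset.coe_sort_coe, Finset.mem_coe, mem_Sfin, hx]
    constructor
    · rintro ⟨hs, hl⟩; exact ⟨hs, by omega⟩
    · rintro ⟨hs, hl⟩; exact ⟨hs, by omega⟩
  have hQ : Qb (n - t) n = ∑ i ∈ Finset.range (t + 1), (n - t).choose i := by
    rw [Qb, show n + 1 - (n - t) = t + 1 by omega]
  rw [hset, Set.ncard_coe_finset, ← hQ]
  constructor
  · intro h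
    by_contra hch
    have hs := strict n x hx hch (n - t) (by rw [hx]; omega) (by rw [hx]; omega)
    rw [hx] at hs
    exact absurd h (Nat.ne_of_lt hs)
  · intro hch
    have := (alt_exact x hch).1 (n - t)
    rwa [hx] at this
end

section
/- Let u and v be binary words and t ≥ 1 with t ≤ |u| + |v| + 1. Let x = u·1·v and y = u·0·v (so x and y have Hamming distance one). Then D_t(x) ∩ D_t(y) = D_{t−1}(u·v). -/
lemma key_s13 (u v z : List Bool) (h1 : z.Sublist (u ++ true :: v))
    (h2 : z.Sublist (u ++ false :: v)) : z.Sublist (u ++ v) := by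
  obtain ⟨z1, z2, rfl, hz1, hz2⟩ := List.sublist_append_iff.mp h1
  obtain ⟨w1, w2, heq, hw1, hw2⟩ := List.sublist_append_iff.mp h2
  cases hz2 with
  | cons _ h => exact hz1.append h
  | cons_cons _ h =>
    rename_i z2'
    cases hw2 with
    | cons _ hw => exact heq ▸ (hw1.append hw)
    | cons_cons _ hw =>
      rename_i w2'
      rcases List.append_eq_append_iff.mp heq with ⟨a', rfl, ha⟩ | ⟨c', rfl, hc⟩
      · cases a' with
        | nil => simp at ha
        | cons b a'' =>
          obtain ⟨rfl, rfl⟩ : true = b ∧ z2' = a'' ++ false :: w2' := by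
            simpa using ha
          rw [heq]
          exact hw1.append ((List.sublist_append_right a'' (false :: w2')).trans h)
      · cases c' with
        | nil => simp at hc
        | cons b c'' =>
          obtain ⟨rfl, rfl⟩ : false = b ∧ w2' = c'' ++ true :: z2' := by
            simpa using hc
          exact hz1.append ((List.sublist_append_right c'' (true :: z2')).trans hw)


/-- For `x = u·1·v` and `y = u·0·v` (Hamming distance one) and `1 ≤ t ≤ |u|+|v|+1`,
we have `D_t(x) ∩ D_t(y) = D_{t-1}(u·v)`. -/
theorem stmt13 (u v : List Bool) (t : ℕ) (ht1 : 1 ≤ t)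
    (ht2 : t ≤ u.length + v.length + 1) :
    deletionBall t (u ++ true :: v) ∩ deletionBall t (u ++ false :: v) =
      deletionBall (t - 1) (u ++ v) := by
  ext z
  simp only [deletionBall, Set.mem_inter_iff, Set.mem_setOf_eq, List.length_append,
    List.length_cons]
  constructor
  · rintro ⟨⟨h1, hl⟩, h2, -⟩
    exact ⟨key_s13 u v z h1 h2, by omega⟩
  · rintro ⟨hs, hl⟩
    have h1 : z.Sublist (u ++ true :: v) :=
      hs.trans ((List.Sublist.refl u).append (List.sublist_cons_self true v))
    have h2 : z.Sublist (u ++ false :: v) :=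
      hs.trans ((List.Sublist.refl u).append (List.sublist_cons_self false v))
    exact ⟨⟨h1, by omega⟩, h2, by omega⟩
end
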